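/- arXiv:math/0602544 — 3 statements merged into one kernel-verified Lean document; each statement's English description precedes it below -/
import Mathlib

section
/- The reduction relation →_FP, the compatible closure of the axioms (β), (η̄): M ▷ λx.(M x) for x ∉ FV(M), (π₁), (π₂), (S̄P): M ▷ ⟨π₁M, π₂M⟩, (δπ): ⟨M,N⟩P ▷ ⟨M P, N P⟩, (π₁λ): π₁(λx.M) ▷ λx.π₁M, and (π₂λ): π₂(λx.M) ▷ λx.π₂M, is confluent. -/
/-- Untyped lambda terms with pairing and projections, de Bruijn representation
(so terms are automatically identified up to alpha-equivalence). -/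
inductive Tm : Type
  | var : Nat → Tm
  | app : Tm → Tm → Tm
  | lam : Tm → Tm
  | pair : Tm → Tm → Tm
  | p1 : Tm → Tm
  | p2 : Tm → Tm

/-- Shift free de Bruijn indices ≥ d up by one. -/
def Tm.lift (d : Nat) : Tm → Tm
  | .var n => if n < d then .var n else .var (n + 1)
  | .app a b => .app (a.lift d) (b.lift d)
  | .lam a => .lam (a.lift (d + 1))
  | .pair a b => .pair (a.lift d) (b.lift d)
  | .p1 a => .p1 (a.lift d)
  | .p2 a => .p2 (a.lift d)

/-- Capture-avoiding substitution of s for variable k. -/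
def Tm.subst : Tm → Nat → Tm → Tm
  | .var n, k, s => if n = k then s else if n < k then .var n else .var (n - 1)
  | .app a b, k, s => .app (a.subst k s) (b.subst k s)
  | .lam a, k, s => .lam (a.subst (k + 1) (s.lift 0))
  | .pair a b, k, s => .pair (a.subst k s) (b.subst k s)
  | .p1 a, k, s => .p1 (a.subst k s)
  | .p2 a, k, s => .p2 (a.subst k s)

/-- One-step FP-reduction: compatible closure of (β), (η̄), (π₁), (π₂), (S̄P), (δπ), (π₁λ), (π₂λ). -/
inductive StepFP : Tm → Tm → Prop
  | beta {M N} : StepFP (.app (.lam M) N) (M.subst 0 N)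
  | eta {M} : StepFP M (.lam (.app (M.lift 0) (.var 0)))
  | pi1 {M N} : StepFP (.p1 (.pair M N)) M
  | pi2 {M N} : StepFP (.p2 (.pair M N)) N
  | sp {M} : StepFP M (.pair (.p1 M) (.p2 M))
  | dpi {M N P} : StepFP (.app (.pair M N) P) (.pair (.app M P) (.app N P))
  | pi1lam {M} : StepFP (.p1 (.lam M)) (.lam (.p1 M))
  | pi2lam {M} : StepFP (.p2 (.lam M)) (.lam (.p2 M))
  | lam {M M'} : StepFP M M' → StepFP (.lam M) (.lam M')
  | appL {M M' N} : StepFP M M' → StepFP (.app M N) (.app M' N)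
  | appR {M N N'} : StepFP N N' → StepFP (.app M N) (.app M N')
  | pairL {M M' N} : StepFP M M' → StepFP (.pair M N) (.pair M' N)
  | pairR {M N N'} : StepFP N N' → StepFP (.pair M N) (.pair M N')
  | p1 {M M'} : StepFP M M' → StepFP (.p1 M) (.p1 M')
  | p2 {M M'} : StepFP M M' → StepFP (.p2 M) (.p2 M')

set_option linter.unreachableTactic false
set_option linter.unusedTactic false

/-! ### de Bruijn lemmas -/

theorem lift_lift (M : Tm) : ∀ k d, k ≤ d →
    (M.lift k).lift (d+1) = (M.lift d).lift k := by
  induction M with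
  | var n =>
    intro k d h
    simp only [Tm.lift]
    split_ifs <;> simp only [Tm.lift] <;> split_ifs <;>
      first
        | rfl
        | (exact congrArg Tm.var (by omega))
        | (exfalso; omega)
  | app a b iha ihb => intro k d h; simp only [Tm.lift, iha _ _ h, ihb _ _ h]
  | lam a iha => intro k d h; simp only [Tm.lift, iha (k+1) (d+1) (by omega)]
  | pair a b iha ihb => intro k d h; simp only [Tm.lift, iha _ _ h, ihb _ _ h]
  | p1 a iha => intro k d h; simp only [Tm.lift, iha _ _ h]
  | p2 a iha => intro k d h; simp only [Tm.lift, iha _ _ h]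

theorem subst_lift_cancel (M : Tm) : ∀ k N, (M.lift k).subst k N = M := by
  induction M with
  | var n =>
    intro k N
    simp only [Tm.lift]
    split_ifs <;> (try simp only [Tm.lift, Tm.subst]) <;> (try split_ifs) <;>
        (try simp only [Tm.lift, Tm.subst]) <;> (try split_ifs) <;>
      first
        | rfl
        | (exact congrArg Tm.var (by omega))
        | (exfalso; omega)
  | app a b iha ihb => intro k N; simp only [Tm.lift, Tm.subst, iha, ihb]
  | lam a iha => intro k N; simp only [Tm.lift, Tm.subst, iha]
  | pair a b iha ihb => intro k N; simp only [Tm.lift, Tm.subst, iha, ihb]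
  | p1 a iha => intro k N; simp only [Tm.lift, Tm.subst, iha]
  | p2 a iha => intro k N; simp only [Tm.lift, Tm.subst, iha]

/-- d ≤ k case. -/
theorem lift_subst_le (M : Tm) : ∀ N d k, d ≤ k →
    (M.subst k N).lift d = (M.lift d).subst (k+1) (N.lift d) := by
  induction M with
  | var n =>
    intro N d k h
    simp only [Tm.subst]
    split_ifs <;> (try simp only [Tm.lift, Tm.subst]) <;> (try split_ifs) <;>
        (try simp only [Tm.lift, Tm.subst]) <;> (try split_ifs) <;>
      first
        | rfl
        | (exact congrArg Tm.var (by omega))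
        | (exfalso; omega)
  | app a b iha ihb => intro N d k h; simp only [Tm.lift, Tm.subst, iha _ _ _ h, ihb _ _ _ h]
  | lam a iha =>
    intro N d k h
    simp only [Tm.lift, Tm.subst, iha (N.lift 0) (d+1) (k+1) (by omega)]
    rw [lift_lift N 0 d (by omega)]
  | pair a b iha ihb => intro N d k h; simp only [Tm.lift, Tm.subst, iha _ _ _ h, ihb _ _ _ h]
  | p1 a iha => intro N d k h; simp only [Tm.lift, Tm.subst, iha _ _ _ h]
  | p2 a iha => intro N d k h; simp only [Tm.lift, Tm.subst, iha _ _ _ h]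

/-- k ≤ d case. -/
theorem lift_subst_ge (M : Tm) : ∀ N d k, k ≤ d →
    (M.subst k N).lift d = (M.lift (d+1)).subst k (N.lift d) := by
  induction M with
  | var n =>
    intro N d k h
    simp only [Tm.subst]
    split_ifs <;> (try simp only [Tm.lift, Tm.subst]) <;> (try split_ifs) <;>
        (try simp only [Tm.lift, Tm.subst]) <;> (try split_ifs) <;>
      first
        | rfl
        | (exact congrArg Tm.var (by omega))
        | (exfalso; omega)
  | app a b iha ihb => intro N d k h; simp only [Tm.lift, Tm.subst, iha _ _ _ h, ihb _ _ _ h]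
  | lam a iha =>
    intro N d k h
    simp only [Tm.lift, Tm.subst, iha (N.lift 0) (d+1) (k+1) (by omega)]
    rw [lift_lift N 0 d (by omega)]
  | pair a b iha ihb => intro N d k h; simp only [Tm.lift, Tm.subst, iha _ _ _ h, ihb _ _ _ h]
  | p1 a iha => intro N d k h; simp only [Tm.lift, Tm.subst, iha _ _ _ h]
  | p2 a iha => intro N d k h; simp only [Tm.lift, Tm.subst, iha _ _ _ h]

theorem subst_subst (M : Tm) : ∀ N P k d, k ≤ d →
    (M.subst k N).subst d P = (M.subst (d+1) (P.lift k)).subst k (N.subst d P) := by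
  induction M with
  | var n =>
    intro N P k d h
    simp only [Tm.subst]
    split_ifs <;> (try simp only [Tm.lift, Tm.subst]) <;> (try split_ifs) <;>
        (try simp only [Tm.lift, Tm.subst]) <;> (try split_ifs) <;>
      first
        | rfl
        | (exact congrArg Tm.var (by omega))
        | (exfalso; omega)
        | (exact (subst_lift_cancel P k (N.subst d P)).symm)
  | app a b iha ihb => intro N P k d h; simp only [Tm.subst, iha _ _ _ _ h, ihb _ _ _ _ h]
  | lam a iha =>
    intro N P k d h
    simp only [Tm.subst, iha (N.lift 0) (P.lift 0) (k+1) (d+1) (by omega)]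
    rw [lift_lift P 0 k (by omega), lift_subst_le N P 0 d (by omega)]
  | pair a b iha ihb => intro N P k d h; simp only [Tm.subst, iha _ _ _ _ h, ihb _ _ _ _ h]
  | p1 a iha => intro N P k d h; simp only [Tm.subst, iha _ _ _ _ h]
  | p2 a iha => intro N P k d h; simp only [Tm.subst, iha _ _ _ _ h]

theorem lift_succ_subst_var (M : Tm) : ∀ k, (M.lift (k+1)).subst k (.var k) = M := by
  induction M with
  | var n =>
    intro k
    simp only [Tm.lift]
    split_ifs <;> (try simp only [Tm.lift, Tm.subst]) <;> (try split_ifs) <;>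
        (try simp only [Tm.lift, Tm.subst]) <;> (try split_ifs) <;>
      first
        | rfl
        | (exact congrArg Tm.var (by omega))
        | (exfalso; omega)
  | app a b iha ihb => intro k; simp only [Tm.lift, Tm.subst, Tm.lift, iha, ihb]
  | lam a iha =>
    intro k
    simp only [Tm.lift, Tm.subst]
    rw [if_neg (by omega : ¬ k < 0), iha]
  | pair a b iha ihb => intro k; simp only [Tm.lift, Tm.subst, iha, ihb]
  | p1 a iha => intro k; simp only [Tm.lift, Tm.subst, iha]
  | p2 a iha => intro k; simp only [Tm.lift, Tm.subst, iha]

/-! ### The two sub-relations: contractions (B) and expansions (E) -/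

inductive StepB : Tm → Tm → Prop
  | beta {M N} : StepB (.app (.lam M) N) (M.subst 0 N)
  | pi1 {M N} : StepB (.p1 (.pair M N)) M
  | pi2 {M N} : StepB (.p2 (.pair M N)) N
  | dpi {M N P} : StepB (.app (.pair M N) P) (.pair (.app M P) (.app N P))
  | pi1lam {M} : StepB (.p1 (.lam M)) (.lam (.p1 M))
  | pi2lam {M} : StepB (.p2 (.lam M)) (.lam (.p2 M))
  | lam {M M'} : StepB M M' → StepB (.lam M) (.lam M')
  | appL {M M' N} : StepB M M' → StepB (.app M N) (.app M' N)
  | appR {M N N'} : StepB N N' → StepB (.app M N) (.app M N')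
  | pairL {M M' N} : StepB M M' → StepB (.pair M N) (.pair M' N)
  | pairR {M N N'} : StepB N N' → StepB (.pair M N) (.pair M N')
  | p1 {M M'} : StepB M M' → StepB (.p1 M) (.p1 M')
  | p2 {M M'} : StepB M M' → StepB (.p2 M) (.p2 M')

/-- Parallel B-reduction (Tait–Martin-Löf style). -/
inductive Bpar : Tm → Tm → Prop
  | var {n} : Bpar (.var n) (.var n)
  | app {M M' N N'} : Bpar M M' → Bpar N N' → Bpar (.app M N) (.app M' N')
  | lam {M M'} : Bpar M M' → Bpar (.lam M) (.lam M')
  | pair {M M' N N'} : Bpar M M' → Bpar N N' → Bpar (.pair M N) (.pair M' N')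
  | p1 {M M'} : Bpar M M' → Bpar (.p1 M) (.p1 M')
  | p2 {M M'} : Bpar M M' → Bpar (.p2 M) (.p2 M')
  | beta {A A' C C'} : Bpar A A' → Bpar C C' → Bpar (.app (.lam A) C) (A'.subst 0 C')
  | pi1 {U U' V} : Bpar U U' → Bpar (.p1 (.pair U V)) U'
  | pi2 {U V V'} : Bpar V V' → Bpar (.p2 (.pair U V)) V'
  | dpi {U U' V V' W W'} : Bpar U U' → Bpar V V' → Bpar W W' →
      Bpar (.app (.pair U V) W) (.pair (.app U' W') (.app V' W'))
  | pi1lam {A A'} : Bpar A A' → Bpar (.p1 (.lam A)) (.lam (.p1 A'))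
  | pi2lam {A A'} : Bpar A A' → Bpar (.p2 (.lam A)) (.lam (.p2 A'))

/-- Parallel E-reduction (expansions). -/
inductive Epar : Tm → Tm → Prop
  | var {n} : Epar (.var n) (.var n)
  | app {M M' N N'} : Epar M M' → Epar N N' → Epar (.app M N) (.app M' N')
  | lam {M M'} : Epar M M' → Epar (.lam M) (.lam M')
  | pair {M M' N N'} : Epar M M' → Epar N N' → Epar (.pair M N) (.pair M' N')
  | p1 {M M'} : Epar M M' → Epar (.p1 M) (.p1 M')
  | p2 {M M'} : Epar M M' → Epar (.p2 M) (.p2 M')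
  | eta {M M'} : Epar M M' → Epar M (.lam (.app (M'.lift 0) (.var 0)))
  | sp {M M'} : Epar M M' → Epar M (.pair (.p1 M') (.p2 M'))

/-- One congruence layer of parallel E-reduction. -/
inductive EparCong : Tm → Tm → Prop
  | var {n} : EparCong (.var n) (.var n)
  | app {M M' N N'} : Epar M M' → Epar N N' → EparCong (.app M N) (.app M' N')
  | lam {M M'} : Epar M M' → EparCong (.lam M) (.lam M')
  | pair {M M' N N'} : Epar M M' → Epar N N' → EparCong (.pair M N) (.pair M' N')
  | p1 {M M'} : Epar M M' → EparCong (.p1 M) (.p1 M')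
  | p2 {M M'} : Epar M M' → EparCong (.p2 M) (.p2 M')

/-- Apply a sequence of expansion "wraps" (true = η-wrap, false = SP-wrap). -/
def wr : List Bool → Tm → Tm
  | [], X => X
  | true :: s, X => .lam (.app ((wr s X).lift 0) (.var 0))
  | false :: s, X => .pair (.p1 (wr s X)) (.p2 (wr s X))

theorem Bpar.refl : ∀ M, Bpar M M := by
  intro M
  induction M with
  | var n => exact .var
  | app a b iha ihb => exact .app iha ihb
  | lam a iha => exact .lam iha
  | pair a b iha ihb => exact .pair iha ihb
  | p1 a iha => exact .p1 iha
  | p2 a iha => exact .p2 iha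

theorem Epar.refl : ∀ M, Epar M M := by
  intro M
  induction M with
  | var n => exact .var
  | app a b iha ihb => exact .app iha ihb
  | lam a iha => exact .lam iha
  | pair a b iha ihb => exact .pair iha ihb
  | p1 a iha => exact .p1 iha
  | p2 a iha => exact .p2 iha

theorem lift_var (d : Nat) (n : Nat) :
    (Tm.var n).lift d = if n < d then Tm.var n else Tm.var (n+1) := rfl

theorem stepB_lift {M N : Tm} (h : StepB M N) : ∀ d, StepB (M.lift d) (N.lift d) := by
  induction h with
  | @beta A C =>
    intro d
    simp only [Tm.lift]
    rw [lift_subst_ge A C d 0 (by omega)]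
    exact .beta
  | pi1 => intro d; exact .pi1
  | pi2 => intro d; exact .pi2
  | dpi => intro d; exact .dpi
  | pi1lam => intro d; exact .pi1lam
  | pi2lam => intro d; exact .pi2lam
  | lam _ ih => intro d; exact .lam (ih (d+1))
  | appL _ ih => intro d; exact .appL (ih d)
  | appR _ ih => intro d; exact .appR (ih d)
  | pairL _ ih => intro d; exact .pairL (ih d)
  | pairR _ ih => intro d; exact .pairR (ih d)
  | p1 _ ih => intro d; exact .p1 (ih d)
  | p2 _ ih => intro d; exact .p2 (ih d)

theorem stepFP_lift {M N : Tm} (h : StepFP M N) : ∀ d, StepFP (M.lift d) (N.lift d) := by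
  induction h with
  | @beta A C =>
    intro d
    simp only [Tm.lift]
    rw [lift_subst_ge A C d 0 (by omega)]
    exact .beta
  | @eta M =>
    intro d
    simp only [Tm.lift]
    rw [if_pos (by omega : 0 < d + 1), lift_lift M 0 d (by omega)]
    exact .eta
  | sp => intro d; exact .sp
  | pi1 => intro d; exact .pi1
  | pi2 => intro d; exact .pi2
  | dpi => intro d; exact .dpi
  | pi1lam => intro d; exact .pi1lam
  | pi2lam => intro d; exact .pi2lam
  | lam _ ih => intro d; exact .lam (ih (d+1))
  | appL _ ih => intro d; exact .appL (ih d)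
  | appR _ ih => intro d; exact .appR (ih d)
  | pairL _ ih => intro d; exact .pairL (ih d)
  | pairR _ ih => intro d; exact .pairR (ih d)
  | p1 _ ih => intro d; exact .p1 (ih d)
  | p2 _ ih => intro d; exact .p2 (ih d)

theorem bpar_lift {M N : Tm} (h : Bpar M N) : ∀ d, Bpar (M.lift d) (N.lift d) := by
  induction h with
  | var => intro d; simp only [Tm.lift]; split <;> exact .var
  | app _ _ ih ih' => intro d; exact .app (ih d) (ih' d)
  | lam _ ih => intro d; exact .lam (ih (d+1))
  | pair _ _ ih ih' => intro d; exact .pair (ih d) (ih' d)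
  | p1 _ ih => intro d; exact .p1 (ih d)
  | p2 _ ih => intro d; exact .p2 (ih d)
  | @beta A A' C C' _ _ ih ih' =>
    intro d
    simp only [Tm.lift]
    rw [lift_subst_ge A' C' d 0 (by omega)]
    exact .beta (ih (d+1)) (ih' d)
  | pi1 _ ih => intro d; exact .pi1 (ih d)
  | pi2 _ ih => intro d; exact .pi2 (ih d)
  | dpi _ _ _ ih ih' ih'' => intro d; exact .dpi (ih d) (ih' d) (ih'' d)
  | pi1lam _ ih => intro d; exact .pi1lam (ih (d+1))
  | pi2lam _ ih => intro d; exact .pi2lam (ih (d+1))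

theorem epar_lift {M N : Tm} (h : Epar M N) : ∀ d, Epar (M.lift d) (N.lift d) := by
  induction h with
  | var => intro d; simp only [Tm.lift]; split <;> exact .var
  | app _ _ ih ih' => intro d; exact .app (ih d) (ih' d)
  | lam _ ih => intro d; exact .lam (ih (d+1))
  | pair _ _ ih ih' => intro d; exact .pair (ih d) (ih' d)
  | p1 _ ih => intro d; exact .p1 (ih d)
  | p2 _ ih => intro d; exact .p2 (ih d)
  | @eta M M' _ ih =>
    intro d
    simp only [Tm.lift]
    rw [if_pos (by omega : 0 < d + 1), lift_lift M' 0 d (by omega)]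
    exact .eta (ih d)
  | sp _ ih => intro d; exact .sp (ih d)

theorem bpar_subst {M M' : Tm} (h : Bpar M M') :
    ∀ {N N'} (k : Nat), Bpar N N' → Bpar (M.subst k N) (M'.subst k N') := by
  induction h with
  | @var n =>
    intro N N' k hN
    simp only [Tm.subst]
    split_ifs <;> first | exact hN | exact .var
  | app _ _ ih ih' => intro N N' k hN; exact .app (ih k hN) (ih' k hN)
  | lam _ ih => intro N N' k hN; exact .lam (ih (k+1) (bpar_lift hN 0))
  | pair _ _ ih ih' => intro N N' k hN; exact .pair (ih k hN) (ih' k hN)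
  | p1 _ ih => intro N N' k hN; exact .p1 (ih k hN)
  | p2 _ ih => intro N N' k hN; exact .p2 (ih k hN)
  | @beta A A' C C' _ _ ih ih' =>
    intro N N' k hN
    simp only [Tm.subst]
    rw [subst_subst A' C' N' 0 k (by omega)]
    exact .beta (ih (k+1) (bpar_lift hN 0)) (ih' k hN)
  | pi1 _ ih => intro N N' k hN; exact .pi1 (ih k hN)
  | pi2 _ ih => intro N N' k hN; exact .pi2 (ih k hN)
  | dpi _ _ _ ih ih' ih'' => intro N N' k hN; exact .dpi (ih k hN) (ih' k hN) (ih'' k hN)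
  | pi1lam _ ih => intro N N' k hN; exact .pi1lam (ih (k+1) (bpar_lift hN 0))
  | pi2lam _ ih => intro N N' k hN; exact .pi2lam (ih (k+1) (bpar_lift hN 0))

theorem epar_subst {M M' : Tm} (h : Epar M M') :
    ∀ {N N'} (k : Nat), Epar N N' → Epar (M.subst k N) (M'.subst k N') := by
  induction h with
  | @var n =>
    intro N N' k hN
    simp only [Tm.subst]
    split_ifs <;> first | exact hN | exact .var
  | app _ _ ih ih' => intro N N' k hN; exact .app (ih k hN) (ih' k hN)
  | lam _ ih => intro N N' k hN; exact .lam (ih (k+1) (epar_lift hN 0))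
  | pair _ _ ih ih' => intro N N' k hN; exact .pair (ih k hN) (ih' k hN)
  | p1 _ ih => intro N N' k hN; exact .p1 (ih k hN)
  | p2 _ ih => intro N N' k hN; exact .p2 (ih k hN)
  | @eta M M' _ ih =>
    intro N N' k hN
    simp only [Tm.subst]
    rw [if_neg (by omega : ¬ (0 : Nat) = k + 1), if_pos (by omega : 0 < k + 1)]
    rw [← lift_subst_le M' N' 0 k (by omega)]
    exact .eta (ih k hN)
  | sp _ ih => intro N N' k hN; exact .sp (ih k hN)
/-! ### ReflTransGen helpers -/

abbrev SB := Relation.ReflTransGen StepB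
abbrev SFP := Relation.ReflTransGen StepFP

theorem sb_appL {M M' N : Tm} (h : SB M M') : SB (.app M N) (.app M' N) :=
  Relation.ReflTransGen.lift (fun t => Tm.app t N) (fun _ _ hs => StepB.appL hs) _ _ h
theorem sb_appR {M N N' : Tm} (h : SB N N') : SB (.app M N) (.app M N') :=
  Relation.ReflTransGen.lift (fun t => Tm.app M t) (fun _ _ hs => StepB.appR hs) _ _ h
theorem sb_lam {M M' : Tm} (h : SB M M') : SB (.lam M) (.lam M') :=
  Relation.ReflTransGen.lift Tm.lam (fun _ _ hs => StepB.lam hs) _ _ h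
theorem sb_pairL {M M' N : Tm} (h : SB M M') : SB (.pair M N) (.pair M' N) :=
  Relation.ReflTransGen.lift (fun t => Tm.pair t N) (fun _ _ hs => StepB.pairL hs) _ _ h
theorem sb_pairR {M N N' : Tm} (h : SB N N') : SB (.pair M N) (.pair M N') :=
  Relation.ReflTransGen.lift (fun t => Tm.pair M t) (fun _ _ hs => StepB.pairR hs) _ _ h
theorem sb_p1 {M M' : Tm} (h : SB M M') : SB (.p1 M) (.p1 M') :=
  Relation.ReflTransGen.lift Tm.p1 (fun _ _ hs => StepB.p1 hs) _ _ h
theorem sb_p2 {M M' : Tm} (h : SB M M') : SB (.p2 M) (.p2 M') :=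
  Relation.ReflTransGen.lift Tm.p2 (fun _ _ hs => StepB.p2 hs) _ _ h
theorem sb_lift {M M' : Tm} (h : SB M M') (d : Nat) : SB (M.lift d) (M'.lift d) :=
  Relation.ReflTransGen.lift (Tm.lift d) (fun _ _ hs => stepB_lift hs d) _ _ h
theorem sb_app {M M' N N' : Tm} (h : SB M M') (h' : SB N N') : SB (.app M N) (.app M' N') :=
  (sb_appL h).trans (sb_appR h')
theorem sb_pair {M M' N N' : Tm} (h : SB M M') (h' : SB N N') : SB (.pair M N) (.pair M' N') :=
  (sb_pairL h).trans (sb_pairR h')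

theorem sfp_appL {M M' N : Tm} (h : SFP M M') : SFP (.app M N) (.app M' N) :=
  Relation.ReflTransGen.lift (fun t => Tm.app t N) (fun _ _ hs => StepFP.appL hs) _ _ h
theorem sfp_appR {M N N' : Tm} (h : SFP N N') : SFP (.app M N) (.app M N') :=
  Relation.ReflTransGen.lift (fun t => Tm.app M t) (fun _ _ hs => StepFP.appR hs) _ _ h
theorem sfp_lam {M M' : Tm} (h : SFP M M') : SFP (.lam M) (.lam M') :=
  Relation.ReflTransGen.lift Tm.lam (fun _ _ hs => StepFP.lam hs) _ _ h
theorem sfp_pairL {M M' N : Tm} (h : SFP M M') : SFP (.pair M N) (.pair M' N) :=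
  Relation.ReflTransGen.lift (fun t => Tm.pair t N) (fun _ _ hs => StepFP.pairL hs) _ _ h
theorem sfp_pairR {M N N' : Tm} (h : SFP N N') : SFP (.pair M N) (.pair M N') :=
  Relation.ReflTransGen.lift (fun t => Tm.pair M t) (fun _ _ hs => StepFP.pairR hs) _ _ h
theorem sfp_p1 {M M' : Tm} (h : SFP M M') : SFP (.p1 M) (.p1 M') :=
  Relation.ReflTransGen.lift Tm.p1 (fun _ _ hs => StepFP.p1 hs) _ _ h
theorem sfp_p2 {M M' : Tm} (h : SFP M M') : SFP (.p2 M) (.p2 M') :=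
  Relation.ReflTransGen.lift Tm.p2 (fun _ _ hs => StepFP.p2 hs) _ _ h
theorem sfp_lift {M M' : Tm} (h : SFP M M') (d : Nat) : SFP (M.lift d) (M'.lift d) :=
  Relation.ReflTransGen.lift (Tm.lift d) (fun _ _ hs => stepFP_lift hs d) _ _ h

/-! ### Takahashi's complete development for B -/

def bstar : Tm → Tm
  | .var n => .var n
  | .lam A => .lam (bstar A)
  | .pair U V => .pair (bstar U) (bstar V)
  | .app (.lam A) C => (bstar A).subst 0 (bstar C)
  | .app (.pair U V) W => .pair (.app (bstar U) (bstar W)) (.app (bstar V) (bstar W))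
  | .app F C => .app (bstar F) (bstar C)
  | .p1 (.pair U V) => bstar U
  | .p1 (.lam A) => .lam (.p1 (bstar A))
  | .p1 F => .p1 (bstar F)
  | .p2 (.pair U V) => bstar V
  | .p2 (.lam A) => .lam (.p2 (bstar A))
  | .p2 F => .p2 (bstar F)

theorem bpar_triangle : ∀ {M N : Tm}, Bpar M N → Bpar N (bstar M) := by
  intro M N h
  induction h with
  | var => exact .var
  | @app F F' C C' hF hC ihF ihC =>
    cases F with
    | lam A =>
      cases hF with
      | lam hA =>
        simp only [bstar]
        cases ihF with
        | lam ihA => exact .beta ihA ihC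
    | pair U V =>
      cases hF with
      | pair hU hV =>
        simp only [bstar]
        cases ihF with
        | pair ihU ihV => exact .dpi ihU ihV ihC
    | var n => exact .app ihF ihC
    | app _ _ => exact .app ihF ihC
    | p1 _ => exact .app ihF ihC
    | p2 _ => exact .app ihF ihC
  | lam _ ih => exact .lam ih
  | pair _ _ ih ih' => exact .pair ih ih'
  | @p1 F F' hF ihF =>
    cases F with
    | lam A =>
      cases hF with
      | lam hA =>
        simp only [bstar]
        cases ihF with
        | lam ihA => exact .pi1lam ihA
    | pair U V =>
      cases hF with
      | pair hU hV =>
        simp only [bstar]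
        cases ihF with
        | pair ihU ihV => exact .pi1 ihU
    | var n => exact .p1 ihF
    | app _ _ => exact .p1 ihF
    | p1 _ => exact .p1 ihF
    | p2 _ => exact .p1 ihF
  | @p2 F F' hF ihF =>
    cases F with
    | lam A =>
      cases hF with
      | lam hA =>
        simp only [bstar]
        cases ihF with
        | lam ihA => exact .pi2lam ihA
    | pair U V =>
      cases hF with
      | pair hU hV =>
        simp only [bstar]
        cases ihF with
        | pair ihU ihV => exact .pi2 ihV
    | var n => exact .p2 ihF
    | app _ _ => exact .p2 ihF
    | p1 _ => exact .p2 ihF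
    | p2 _ => exact .p2 ihF
  | @beta A A' C C' _ _ ihA ihC =>
    simp only [bstar]
    exact bpar_subst ihA 0 ihC
  | pi1 _ ih => simp only [bstar]; exact ih
  | pi2 _ ih => simp only [bstar]; exact ih
  | dpi _ _ _ ihU ihV ihW => simp only [bstar]; exact .pair (.app ihU ihW) (.app ihV ihW)
  | pi1lam _ ih => simp only [bstar]; exact .lam (.p1 ih)
  | pi2lam _ ih => simp only [bstar]; exact .lam (.p2 ih)

theorem bpar_diamond {M N₁ N₂ : Tm} (h₁ : Bpar M N₁) (h₂ : Bpar M N₂) :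
    ∃ P, Bpar N₁ P ∧ Bpar N₂ P :=
  ⟨bstar M, bpar_triangle h₁, bpar_triangle h₂⟩

/-! ### Wrap machinery for E -/

theorem wr_lift : ∀ (s : List Bool) (X : Tm), (wr s X).lift 0 = wr s (X.lift 0) := by
  intro s
  induction s with
  | nil => intro X; rfl
  | cons b s ih =>
    intro X
    cases b with
    | true =>
      simp only [wr, Tm.lift]
      rw [if_pos (by omega : (0:Nat) < 0 + 1), lift_lift (wr s X) 0 0 (by omega), ih]
    | false => simp only [wr, Tm.lift, ih]

theorem einv {M Q : Tm} (h : Epar M Q) : ∃ s Q₀, EparCong M Q₀ ∧ Q = wr s Q₀ := by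
  induction h with
  | @var n => exact ⟨[], .var n, .var, rfl⟩
  | app h h' _ _ => exact ⟨[], _, .app h h', rfl⟩
  | lam h _ => exact ⟨[], _, .lam h, rfl⟩
  | pair h h' _ _ => exact ⟨[], _, .pair h h', rfl⟩
  | p1 h _ => exact ⟨[], _, .p1 h, rfl⟩
  | p2 h _ => exact ⟨[], _, .p2 h, rfl⟩
  | eta _ ih =>
    obtain ⟨s, Q₀, hc, rfl⟩ := ih
    exact ⟨true :: s, Q₀, hc, rfl⟩
  | sp _ ih =>
    obtain ⟨s, Q₀, hc, rfl⟩ := ih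
    exact ⟨false :: s, Q₀, hc, rfl⟩

theorem epar_wr_stack {M Y : Tm} (h : Epar M Y) : ∀ s, Epar M (wr s Y) := by
  intro s
  induction s with
  | nil => exact h
  | cons b s ih => cases b with
    | true => exact .eta ih
    | false => exact .sp ih

theorem epar_wr_cong {X Y : Tm} (h : Epar X Y) : ∀ s, Epar (wr s X) (wr s Y) := by
  intro s
  induction s with
  | nil => exact h
  | cons b s ih => cases b with
    | true => exact .lam (.app (epar_lift ih 0) .var)
    | false => exact .pair (.p1 ih) (.p2 ih)

theorem sb_wr_cong {X Y : Tm} (h : SB X Y) : ∀ s, SB (wr s X) (wr s Y) := by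
  intro s
  induction s with
  | nil => exact h
  | cons b s ih => cases b with
    | true => exact sb_lam (sb_appL (sb_lift ih 0))
    | false => exact sb_pair (sb_p1 ih) (sb_p2 ih)

theorem epar_diamond : ∀ (M : Tm) {Q R : Tm}, Epar M Q → Epar M R →
    ∃ P, Epar Q P ∧ Epar R P := by
  intro M
  induction M with
  | var n =>
    intro Q R hQ hR
    obtain ⟨s, Q₀, hcQ, rfl⟩ := einv hQ
    obtain ⟨t, R₀, hcR, rfl⟩ := einv hR
    cases hcQ; cases hcR
    exact ⟨wr s (wr t (.var n)),
      epar_wr_cong (epar_wr_stack .var t) s,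
      epar_wr_stack (epar_wr_cong Epar.var t) s⟩
  | app F C ihF ihC =>
    intro Q R hQ hR
    obtain ⟨s, Q₀, hcQ, rfl⟩ := einv hQ
    obtain ⟨t, R₀, hcR, rfl⟩ := einv hR
    cases hcQ with
    | app hF₁ hC₁ =>
      cases hcR with
      | app hF₂ hC₂ =>
        obtain ⟨PF, hPF₁, hPF₂⟩ := ihF hF₁ hF₂
        obtain ⟨PC, hPC₁, hPC₂⟩ := ihC hC₁ hC₂
        exact ⟨wr s (wr t (.app PF PC)),
          epar_wr_cong (epar_wr_stack (.app hPF₁ hPC₁) t) s,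
          epar_wr_stack (epar_wr_cong (.app hPF₂ hPC₂) t) s⟩
  | lam A ihA =>
    intro Q R hQ hR
    obtain ⟨s, Q₀, hcQ, rfl⟩ := einv hQ
    obtain ⟨t, R₀, hcR, rfl⟩ := einv hR
    cases hcQ with
    | lam hA₁ =>
      cases hcR with
      | lam hA₂ =>
        obtain ⟨PA, hPA₁, hPA₂⟩ := ihA hA₁ hA₂
        exact ⟨wr s (wr t (.lam PA)),
          epar_wr_cong (epar_wr_stack (.lam hPA₁) t) s,
          epar_wr_stack (epar_wr_cong (.lam hPA₂) t) s⟩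
  | pair U V ihU ihV =>
    intro Q R hQ hR
    obtain ⟨s, Q₀, hcQ, rfl⟩ := einv hQ
    obtain ⟨t, R₀, hcR, rfl⟩ := einv hR
    cases hcQ with
    | pair hU₁ hV₁ =>
      cases hcR with
      | pair hU₂ hV₂ =>
        obtain ⟨PU, hPU₁, hPU₂⟩ := ihU hU₁ hU₂
        obtain ⟨PV, hPV₁, hPV₂⟩ := ihV hV₁ hV₂
        exact ⟨wr s (wr t (.pair PU PV)),
          epar_wr_cong (epar_wr_stack (.pair hPU₁ hPV₁) t) s,
          epar_wr_stack (epar_wr_cong (.pair hPU₂ hPV₂) t) s⟩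
  | p1 F ihF =>
    intro Q R hQ hR
    obtain ⟨s, Q₀, hcQ, rfl⟩ := einv hQ
    obtain ⟨t, R₀, hcR, rfl⟩ := einv hR
    cases hcQ with
    | p1 hF₁ =>
      cases hcR with
      | p1 hF₂ =>
        obtain ⟨PF, hPF₁, hPF₂⟩ := ihF hF₁ hF₂
        exact ⟨wr s (wr t (.p1 PF)),
          epar_wr_cong (epar_wr_stack (.p1 hPF₁) t) s,
          epar_wr_stack (epar_wr_cong (.p1 hPF₂) t) s⟩
  | p2 F ihF =>
    intro Q R hQ hR
    obtain ⟨s, Q₀, hcQ, rfl⟩ := einv hQ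
    obtain ⟨t, R₀, hcR, rfl⟩ := einv hR
    cases hcQ with
    | p2 hF₁ =>
      cases hcR with
      | p2 hF₂ =>
        obtain ⟨PF, hPF₁, hPF₂⟩ := ihF hF₁ hF₂
        exact ⟨wr s (wr t (.p2 PF)),
          epar_wr_cong (epar_wr_stack (.p2 hPF₁) t) s,
          epar_wr_stack (epar_wr_cong (.p2 hPF₂) t) s⟩
/-! ### Key lemmas: B-reductions through expansion wraps -/

theorem subst_body_eta (W Q : Tm) :
    (Tm.app (W.lift 0) (.var 0)).subst 0 Q = .app W Q := by
  simp only [Tm.subst]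
  rw [subst_lift_cancel W 0 Q]
  simp

theorem subst_p1 (X Q : Tm) (k : Nat) : (Tm.p1 X).subst k Q = .p1 (X.subst k Q) := by
  simp only [Tm.subst]
theorem subst_p2 (X Q : Tm) (k : Nat) : (Tm.p2 X).subst k Q = .p2 (X.subst k Q) := by
  simp only [Tm.subst]

theorem keyLam : ∀ (s : List Bool) (X Q R : Tm), Epar R (X.subst 0 Q) →
    ∃ P R', Epar R P ∧ Epar R R' ∧
      SB (.app (wr s (.lam X)) Q) P ∧
      SB (.app (.p1 (wr s (.lam X))) Q) (.p1 R') ∧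
      SB (.app (.p2 (wr s (.lam X))) Q) (.p2 R') := by
  intro s
  induction s with
  | nil =>
    intro X Q R h
    refine ⟨X.subst 0 Q, X.subst 0 Q, h, h, Relation.ReflTransGen.single .beta, ?_, ?_⟩
    · refine Relation.ReflTransGen.head (.appL .pi1lam) ?_
      have e : (Tm.p1 X).subst 0 Q = .p1 (X.subst 0 Q) := subst_p1 X Q 0
      exact e ▸ Relation.ReflTransGen.single .beta
    · refine Relation.ReflTransGen.head (.appL .pi2lam) ?_
      have e : (Tm.p2 X).subst 0 Q = .p2 (X.subst 0 Q) := subst_p2 X Q 0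
      exact e ▸ Relation.ReflTransGen.single .beta
  | cons b s ih =>
    intro X Q R h
    obtain ⟨P, R', h1, h2, c3, c4, c5⟩ := ih X Q R h
    cases b with
    | true =>
      refine ⟨P, P, h1, h1, ?_, ?_, ?_⟩
      · refine Relation.ReflTransGen.head .beta ?_
        rw [subst_body_eta]
        exact c3
      · refine Relation.ReflTransGen.head (.appL .pi1lam) ?_
        refine Relation.ReflTransGen.head .beta ?_
        rw [subst_p1, subst_body_eta]
        exact sb_p1 c3
      · refine Relation.ReflTransGen.head (.appL .pi2lam) ?_
        refine Relation.ReflTransGen.head .beta ?_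
        rw [subst_p2, subst_body_eta]
        exact sb_p2 c3
    | false =>
      refine ⟨.pair (.p1 R') (.p2 R'), R', .sp h2, h2, ?_, ?_, ?_⟩
      · exact Relation.ReflTransGen.head .dpi (sb_pair c4 c5)
      · exact Relation.ReflTransGen.head (.appL .pi1) c4
      · exact Relation.ReflTransGen.head (.appL .pi2) c5

theorem keyPair : ∀ (s : List Bool) (X Y Q : Tm),
    SB (.app (wr s (.pair X Y)) Q) (.pair (.app X Q) (.app Y Q)) ∧
    SB (.app (.p1 (wr s (.pair X Y))) Q) (.app X Q) ∧
    SB (.app (.p2 (wr s (.pair X Y))) Q) (.app Y Q) := by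
  intro s
  induction s with
  | nil =>
    intro X Y Q
    exact ⟨Relation.ReflTransGen.single .dpi,
      Relation.ReflTransGen.single (.appL .pi1),
      Relation.ReflTransGen.single (.appL .pi2)⟩
  | cons b s ih =>
    intro X Y Q
    obtain ⟨c1, c2, c3⟩ := ih X Y Q
    cases b with
    | true =>
      refine ⟨?_, ?_, ?_⟩
      · refine Relation.ReflTransGen.head .beta ?_
        rw [subst_body_eta _ Q]
        exact c1
      · refine Relation.ReflTransGen.head (.appL .pi1lam) ?_
        refine Relation.ReflTransGen.head .beta ?_
        rw [subst_p1, subst_body_eta _ Q]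
        exact (sb_p1 c1).trans (Relation.ReflTransGen.single .pi1)
      · refine Relation.ReflTransGen.head (.appL .pi2lam) ?_
        refine Relation.ReflTransGen.head .beta ?_
        rw [subst_p2, subst_body_eta _ Q]
        exact (sb_p2 c1).trans (Relation.ReflTransGen.single .pi2)
    | false =>
      refine ⟨?_, ?_, ?_⟩
      · exact Relation.ReflTransGen.head .dpi (sb_pair c2 c3)
      · exact Relation.ReflTransGen.head (.appL .pi1) c2
      · exact Relation.ReflTransGen.head (.appL .pi2) c3

theorem keyProjPair1 : ∀ (s : List Bool) (X Y R₁ : Tm), Epar R₁ X →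
    ∃ P, SB (.p1 (wr s (.pair X Y))) P ∧ Epar R₁ P := by
  intro s
  induction s with
  | nil =>
    intro X Y R₁ h
    exact ⟨X, Relation.ReflTransGen.single .pi1, h⟩
  | cons b s ih =>
    intro X Y R₁ h
    cases b with
    | true =>
      refine ⟨.lam (.app (X.lift 0) (.var 0)), ?_, .eta h⟩
      refine Relation.ReflTransGen.head .pi1lam ?_
      have e : (wr s (Tm.pair X Y)).lift 0 = wr s (.pair (X.lift 0) (Y.lift 0)) := by
        rw [wr_lift]; rfl
      rw [e]
      refine (sb_lam (sb_p1 (keyPair s (X.lift 0) (Y.lift 0) (.var 0)).1)).trans ?_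
      exact sb_lam (Relation.ReflTransGen.single .pi1)
    | false =>
      obtain ⟨P, hsb, hep⟩ := ih X Y R₁ h
      exact ⟨P, Relation.ReflTransGen.head .pi1 hsb, hep⟩

theorem keyProjPair2 : ∀ (s : List Bool) (X Y R₂ : Tm), Epar R₂ Y →
    ∃ P, SB (.p2 (wr s (.pair X Y))) P ∧ Epar R₂ P := by
  intro s
  induction s with
  | nil =>
    intro X Y R₂ h
    exact ⟨Y, Relation.ReflTransGen.single .pi2, h⟩
  | cons b s ih =>
    intro X Y R₂ h
    cases b with
    | true =>
      refine ⟨.lam (.app (Y.lift 0) (.var 0)), ?_, .eta h⟩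
      refine Relation.ReflTransGen.head .pi2lam ?_
      have e : (wr s (Tm.pair X Y)).lift 0 = wr s (.pair (X.lift 0) (Y.lift 0)) := by
        rw [wr_lift]; rfl
      rw [e]
      refine (sb_lam (sb_p2 (keyPair s (X.lift 0) (Y.lift 0) (.var 0)).1)).trans ?_
      exact sb_lam (Relation.ReflTransGen.single .pi2)
    | false =>
      obtain ⟨P, hsb, hep⟩ := ih X Y R₂ h
      exact ⟨P, Relation.ReflTransGen.head .pi2 hsb, hep⟩

theorem keyProjLam1 : ∀ (s : List Bool) (X A₁ : Tm), Epar A₁ X →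
    ∃ P, SB (.p1 (wr s (.lam X))) P ∧ Epar (.lam (.p1 A₁)) P := by
  intro s
  induction s with
  | nil =>
    intro X A₁ h
    exact ⟨.lam (.p1 X), Relation.ReflTransGen.single .pi1lam, .lam (.p1 h)⟩
  | cons b s ih =>
    intro X A₁ h
    cases b with
    | true =>
      have hpre : Epar A₁ ((X.lift 1).subst 0 (.var 0)) := by
        rw [show (X.lift 1) = X.lift (0+1) from rfl, lift_succ_subst_var X 0]
        exact h
      obtain ⟨P₀, R', h1, h2, c3, c4, c5⟩ := keyLam s (X.lift 1) (.var 0) A₁ hpre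
      refine ⟨.lam (.p1 P₀), ?_, .lam (.p1 h1)⟩
      refine Relation.ReflTransGen.head .pi1lam ?_
      have e : (wr s (Tm.lam X)).lift 0 = wr s (.lam (X.lift 1)) := by
        rw [wr_lift]; rfl
      rw [e]
      exact sb_lam (sb_p1 c3)
    | false =>
      obtain ⟨P, hsb, hep⟩ := ih X A₁ h
      exact ⟨P, Relation.ReflTransGen.head .pi1 hsb, hep⟩

theorem keyProjLam2 : ∀ (s : List Bool) (X A₁ : Tm), Epar A₁ X →
    ∃ P, SB (.p2 (wr s (.lam X))) P ∧ Epar (.lam (.p2 A₁)) P := by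
  intro s
  induction s with
  | nil =>
    intro X A₁ h
    exact ⟨.lam (.p2 X), Relation.ReflTransGen.single .pi2lam, .lam (.p2 h)⟩
  | cons b s ih =>
    intro X A₁ h
    cases b with
    | true =>
      have hpre : Epar A₁ ((X.lift 1).subst 0 (.var 0)) := by
        rw [show (X.lift 1) = X.lift (0+1) from rfl, lift_succ_subst_var X 0]
        exact h
      obtain ⟨P₀, R', h1, h2, c3, c4, c5⟩ := keyLam s (X.lift 1) (.var 0) A₁ hpre
      refine ⟨.lam (.p2 P₀), ?_, .lam (.p2 h1)⟩
      refine Relation.ReflTransGen.head .pi2lam ?_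
      have e : (wr s (Tm.lam X)).lift 0 = wr s (.lam (X.lift 1)) := by
        rw [wr_lift]; rfl
      rw [e]
      exact sb_lam (sb_p2 c3)
    | false =>
      obtain ⟨P, hsb, hep⟩ := ih X A₁ h
      exact ⟨P, Relation.ReflTransGen.head .pi2 hsb, hep⟩
/-! ### Commutation of parallel B with parallel E -/

def tmSize : Tm → Nat
  | .var _ => 1
  | .app a b => tmSize a + tmSize b + 1
  | .lam a => tmSize a + 1
  | .pair a b => tmSize a + tmSize b + 1
  | .p1 a => tmSize a + 1
  | .p2 a => tmSize a + 1

theorem commBE : ∀ (n : Nat) (M : Tm), tmSize M ≤ n → ∀ {N₁ N₂ : Tm},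
    Bpar M N₁ → Epar M N₂ → ∃ P, Epar N₁ P ∧ SB N₂ P := by
  intro n
  induction n with
  | zero => intro M hM; exfalso; cases M <;> simp [tmSize] at hM
  | succ n ih =>
    intro M hM N₁ N₂ hB hE
    obtain ⟨s, Q₀, hc, rfl⟩ := einv hE
    cases hB with
    | @var m =>
      cases hc with
      | var => exact ⟨wr s (.var m), epar_wr_stack .var s, .refl⟩
    | @app F F' C C' hF hC =>
      cases hc with
      | app hF₂ hC₂ =>
        obtain ⟨PF, e1, b1⟩ := ih F (by simp [tmSize] at hM ⊢; omega) hF hF₂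
        obtain ⟨PC, e2, b2⟩ := ih C (by simp [tmSize] at hM ⊢; omega) hC hC₂
        exact ⟨wr s (.app PF PC), epar_wr_stack (.app e1 e2) s,
          sb_wr_cong (sb_app b1 b2) s⟩
    | @lam A A' hA =>
      cases hc with
      | lam hA₂ =>
        obtain ⟨PA, e1, b1⟩ := ih A (by simp [tmSize] at hM ⊢; omega) hA hA₂
        exact ⟨wr s (.lam PA), epar_wr_stack (.lam e1) s, sb_wr_cong (sb_lam b1) s⟩
    | @pair U U' V V' hU hV =>
      cases hc with
      | pair hU₂ hV₂ =>
        obtain ⟨PU, e1, b1⟩ := ih U (by simp [tmSize] at hM ⊢; omega) hU hU₂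
        obtain ⟨PV, e2, b2⟩ := ih V (by simp [tmSize] at hM ⊢; omega) hV hV₂
        exact ⟨wr s (.pair PU PV), epar_wr_stack (.pair e1 e2) s,
          sb_wr_cong (sb_pair b1 b2) s⟩
    | @p1 F F' hF =>
      cases hc with
      | p1 hF₂ =>
        obtain ⟨PF, e1, b1⟩ := ih F (by simp [tmSize] at hM ⊢; omega) hF hF₂
        exact ⟨wr s (.p1 PF), epar_wr_stack (.p1 e1) s, sb_wr_cong (sb_p1 b1) s⟩
    | @p2 F F' hF =>
      cases hc with
      | p2 hF₂ =>
        obtain ⟨PF, e1, b1⟩ := ih F (by simp [tmSize] at hM ⊢; omega) hF hF₂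
        exact ⟨wr s (.p2 PF), epar_wr_stack (.p2 e1) s, sb_wr_cong (sb_p2 b1) s⟩
    | @beta A A' C C' hA hC =>
      cases hc with
      | app hF₂ hC₂ =>
        obtain ⟨t, F₀, hcF, rfl⟩ := einv hF₂
        cases hcF with
        | lam hA₂ =>
          obtain ⟨PA, e1, b1⟩ := ih A (by simp [tmSize] at hM ⊢; omega) hA hA₂
          obtain ⟨PC, e2, b2⟩ := ih C (by simp [tmSize] at hM ⊢; omega) hC hC₂
          obtain ⟨P₀, R', h1, _, c3, _, _⟩ :=
            keyLam t PA PC _ (epar_subst e1 0 e2)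
          refine ⟨wr s P₀, epar_wr_stack h1 s, sb_wr_cong ?_ s⟩
          exact (sb_app (sb_wr_cong (sb_lam b1) t) b2).trans c3
    | @dpi U U' V V' W W' hU hV hW =>
      cases hc with
      | app hF₂ hC₂ =>
        obtain ⟨t, F₀, hcF, rfl⟩ := einv hF₂
        cases hcF with
        | pair hU₂ hV₂ =>
          obtain ⟨PU, e1, b1⟩ := ih U (by simp [tmSize] at hM ⊢; omega) hU hU₂
          obtain ⟨PV, e2, b2⟩ := ih V (by simp [tmSize] at hM ⊢; omega) hV hV₂
          obtain ⟨PW, e3, b3⟩ := ih W (by simp [tmSize] at hM ⊢; omega) hW hC₂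
          refine ⟨wr s (.pair (.app PU PW) (.app PV PW)),
            epar_wr_stack (.pair (.app e1 e3) (.app e2 e3)) s, sb_wr_cong ?_ s⟩
          exact (sb_app (sb_wr_cong (sb_pair b1 b2) t) b3).trans (keyPair t PU PV PW).1
    | @pi1 U U' V hU =>
      cases hc with
      | p1 hF₂ =>
        obtain ⟨t, F₀, hcF, rfl⟩ := einv hF₂
        cases hcF with
        | pair hU₂ hV₂ =>
          obtain ⟨PU, e1, b1⟩ := ih U (by simp [tmSize] at hM ⊢; omega) hU hU₂
          obtain ⟨PV, e2, b2⟩ := ih V (by simp [tmSize] at hM ⊢; omega) (Bpar.refl V) hV₂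
          obtain ⟨P₀, hsb, hep⟩ := keyProjPair1 t PU PV _ e1
          refine ⟨wr s P₀, epar_wr_stack hep s, sb_wr_cong ?_ s⟩
          exact (sb_p1 (sb_wr_cong (sb_pair b1 b2) t)).trans hsb
    | @pi2 U V V' hV =>
      cases hc with
      | p2 hF₂ =>
        obtain ⟨t, F₀, hcF, rfl⟩ := einv hF₂
        cases hcF with
        | pair hU₂ hV₂ =>
          obtain ⟨PU, e1, b1⟩ := ih U (by simp [tmSize] at hM ⊢; omega) (Bpar.refl U) hU₂
          obtain ⟨PV, e2, b2⟩ := ih V (by simp [tmSize] at hM ⊢; omega) hV hV₂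
          obtain ⟨P₀, hsb, hep⟩ := keyProjPair2 t PU PV _ e2
          refine ⟨wr s P₀, epar_wr_stack hep s, sb_wr_cong ?_ s⟩
          exact (sb_p2 (sb_wr_cong (sb_pair b1 b2) t)).trans hsb
    | @pi1lam A A' hA =>
      cases hc with
      | p1 hF₂ =>
        obtain ⟨t, F₀, hcF, rfl⟩ := einv hF₂
        cases hcF with
        | lam hA₂ =>
          obtain ⟨PA, e1, b1⟩ := ih A (by simp [tmSize] at hM ⊢; omega) hA hA₂
          obtain ⟨P₀, hsb, hep⟩ := keyProjLam1 t PA _ e1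
          refine ⟨wr s P₀, epar_wr_stack hep s, sb_wr_cong ?_ s⟩
          exact (sb_p1 (sb_wr_cong (sb_lam b1) t)).trans hsb
    | @pi2lam A A' hA =>
      cases hc with
      | p2 hF₂ =>
        obtain ⟨t, F₀, hcF, rfl⟩ := einv hF₂
        cases hcF with
        | lam hA₂ =>
          obtain ⟨PA, e1, b1⟩ := ih A (by simp [tmSize] at hM ⊢; omega) hA hA₂
          obtain ⟨P₀, hsb, hep⟩ := keyProjLam2 t PA _ e1
          refine ⟨wr s P₀, epar_wr_stack hep s, sb_wr_cong ?_ s⟩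
          exact (sb_p2 (sb_wr_cong (sb_lam b1) t)).trans hsb

theorem commBE' {M N₁ N₂ : Tm} (hB : Bpar M N₁) (hE : Epar M N₂) :
    ∃ P, Epar N₁ P ∧ SB N₂ P :=
  commBE (tmSize M) M (le_refl _) hB hE
/-! ### Generic confluence plumbing -/

section Generic
variable {α : Type _} {r : α → α → Prop}

theorem diamond_strip (hd : ∀ a b c, r a b → r a c → ∃ d, r b d ∧ r c d) :
    ∀ {a c}, Relation.ReflTransGen r a c → ∀ {b}, r a b →
      ∃ d, Relation.ReflTransGen r b d ∧ r c d := by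
  intro a c hac
  induction hac using Relation.ReflTransGen.head_induction_on with
  | refl => intro b hab; exact ⟨b, .refl, hab⟩
  | head h' _ ih =>
    intro b hab
    obtain ⟨e, hxe, hbe⟩ := hd _ _ _ h' hab
    obtain ⟨d, hed, hcd⟩ := ih hxe
    exact ⟨d, .head hbe hed, hcd⟩

theorem diamond_conf (hd : ∀ a b c, r a b → r a c → ∃ d, r b d ∧ r c d) :
    ∀ {a b}, Relation.ReflTransGen r a b → ∀ {c}, Relation.ReflTransGen r a c →
      ∃ d, Relation.ReflTransGen r b d ∧ Relation.ReflTransGen r c d := by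
  intro a b hab
  induction hab using Relation.ReflTransGen.head_induction_on with
  | refl => intro c hac; exact ⟨c, hac, .refl⟩
  | head h' _ ih =>
    intro c hac
    obtain ⟨e, hxe, hce⟩ := diamond_strip hd hac h'
    obtain ⟨d, hbd, hed⟩ := ih hxe
    exact ⟨d, hbd, .head hce hed⟩

theorem rtg_bind {s : α → α → Prop} (h : Relation.ReflTransGen r a b)
    (hrs : ∀ x y, r x y → Relation.ReflTransGen s x y) : Relation.ReflTransGen s a b := by
  induction h with
  | refl => exact .refl
  | tail _ hstep ih => exact ih.trans (hrs _ _ hstep)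

end Generic

/-! ### Tiling commutation to the closures -/

theorem stepB_to_bpar {M N : Tm} (h : StepB M N) : Bpar M N := by
  induction h with
  | beta => exact .beta (Bpar.refl _) (Bpar.refl _)
  | pi1 => exact .pi1 (Bpar.refl _)
  | pi2 => exact .pi2 (Bpar.refl _)
  | dpi => exact .dpi (Bpar.refl _) (Bpar.refl _) (Bpar.refl _)
  | pi1lam => exact .pi1lam (Bpar.refl _)
  | pi2lam => exact .pi2lam (Bpar.refl _)
  | lam _ ih => exact .lam ih
  | appL _ ih => exact .app ih (Bpar.refl _)
  | appR _ ih => exact .app (Bpar.refl _) ih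
  | pairL _ ih => exact .pair ih (Bpar.refl _)
  | pairR _ ih => exact .pair (Bpar.refl _) ih
  | p1 _ ih => exact .p1 ih
  | p2 _ ih => exact .p2 ih

theorem sb_to_bparStar {M N : Tm} (h : SB M N) : Relation.ReflTransGen Bpar M N :=
  rtg_bind h (fun _ _ hs => Relation.ReflTransGen.single (stepB_to_bpar hs))

theorem commB : ∀ {a b : Tm}, Relation.ReflTransGen Bpar a b → ∀ {c}, Epar a c →
    ∃ d, Epar b d ∧ Relation.ReflTransGen Bpar c d := by
  intro a b hab
  induction hab using Relation.ReflTransGen.head_induction_on with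
  | refl => intro c hac; exact ⟨c, hac, .refl⟩
  | head h' _ ih =>
    intro c hac
    obtain ⟨e, hxe, hce⟩ := commBE' h' hac
    obtain ⟨d, hbd, hed⟩ := ih hxe
    exact ⟨d, hbd, (sb_to_bparStar hce).trans hed⟩

theorem commFull : ∀ {a c : Tm}, Relation.ReflTransGen Epar a c →
    ∀ {b}, Relation.ReflTransGen Bpar a b →
    ∃ d, Relation.ReflTransGen Epar b d ∧ Relation.ReflTransGen Bpar c d := by
  intro a c hac
  induction hac using Relation.ReflTransGen.head_induction_on with
  | refl => intro b hab; exact ⟨b, .refl, hab⟩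
  | head h' _ ih =>
    intro b hab
    obtain ⟨e, hbe, hxe⟩ := commB hab h'
    obtain ⟨d, hed, hcd⟩ := ih hxe
    exact ⟨d, .head hbe hed, hcd⟩

/-! ### The union and final confluence -/

def Wrel (a b : Tm) : Prop := ∃ x, Relation.ReflTransGen Bpar a x ∧ Relation.ReflTransGen Epar x b

theorem wrel_diamond : ∀ a b c, Wrel a b → Wrel a c → ∃ d, Wrel b d ∧ Wrel c d := by
  rintro a b c ⟨x, hax, hxb⟩ ⟨y, hay, hyc⟩
  obtain ⟨z, hxz, hyz⟩ :=
    diamond_conf (fun a b c h1 h2 => bpar_diamond h1 h2) hax hay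
  obtain ⟨u, hzu, hbu⟩ := commFull hxb hxz
  obtain ⟨v, hzv, hcv⟩ := commFull hyc hyz
  obtain ⟨w, huw, hvw⟩ :=
    diamond_conf (fun a b c h1 h2 => epar_diamond a h1 h2) hzu hzv
  exact ⟨w, ⟨u, hbu, huw⟩, ⟨v, hcv, hvw⟩⟩

theorem stepFP_classify {M N : Tm} (h : StepFP M N) : Bpar M N ∨ Epar M N := by
  induction h with
  | beta => exact Or.inl (.beta (Bpar.refl _) (Bpar.refl _))
  | eta => exact Or.inr (.eta (Epar.refl _))
  | pi1 => exact Or.inl (.pi1 (Bpar.refl _))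
  | pi2 => exact Or.inl (.pi2 (Bpar.refl _))
  | sp => exact Or.inr (.sp (Epar.refl _))
  | dpi => exact Or.inl (.dpi (Bpar.refl _) (Bpar.refl _) (Bpar.refl _))
  | pi1lam => exact Or.inl (.pi1lam (Bpar.refl _))
  | pi2lam => exact Or.inl (.pi2lam (Bpar.refl _))
  | lam _ ih => exact ih.imp .lam .lam
  | appL _ ih => exact ih.imp (fun h => .app h (Bpar.refl _)) (fun h => .app h (Epar.refl _))
  | appR _ ih => exact ih.imp (fun h => .app (Bpar.refl _) h) (fun h => .app (Epar.refl _) h)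
  | pairL _ ih => exact ih.imp (fun h => .pair h (Bpar.refl _)) (fun h => .pair h (Epar.refl _))
  | pairR _ ih => exact ih.imp (fun h => .pair (Bpar.refl _) h) (fun h => .pair (Epar.refl _) h)
  | p1 _ ih => exact ih.imp .p1 .p1
  | p2 _ ih => exact ih.imp .p2 .p2

theorem sfp_app {M M' N N' : Tm} (h : SFP M M') (h' : SFP N N') :
    SFP (.app M N) (.app M' N') := (sfp_appL h).trans (sfp_appR h')
theorem bpar_to_sfp {M N : Tm} (h : Bpar M N) : SFP M N := by
  induction h with
  | var => exact .refl
  | app _ _ ih ih' => exact sfp_app ih ih'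
  | lam _ ih => exact sfp_lam ih
  | pair _ _ ih ih' => exact (sfp_pairL ih).trans (sfp_pairR ih')
  | p1 _ ih => exact sfp_p1 ih
  | p2 _ ih => exact sfp_p2 ih
  | beta _ _ ih ih' => exact ((sfp_app (sfp_lam ih) ih').trans (Relation.ReflTransGen.single .beta))
  | pi1 _ ih => exact (sfp_p1 (sfp_pairL ih)).trans (Relation.ReflTransGen.single .pi1)
  | pi2 _ ih => exact (sfp_p2 (sfp_pairR ih)).trans (Relation.ReflTransGen.single .pi2)
  | dpi _ _ _ ih ih' ih'' =>
    exact (sfp_app ((sfp_pairL ih).trans (sfp_pairR ih')) ih'').trans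
      (Relation.ReflTransGen.single .dpi)
  | pi1lam _ ih => exact (sfp_p1 (sfp_lam ih)).trans (Relation.ReflTransGen.single .pi1lam)
  | pi2lam _ ih => exact (sfp_p2 (sfp_lam ih)).trans (Relation.ReflTransGen.single .pi2lam)

theorem epar_to_sfp {M N : Tm} (h : Epar M N) : SFP M N := by
  induction h with
  | var => exact .refl
  | app _ _ ih ih' => exact sfp_app ih ih'
  | lam _ ih => exact sfp_lam ih
  | pair _ _ ih ih' => exact (sfp_pairL ih).trans (sfp_pairR ih')
  | p1 _ ih => exact sfp_p1 ih
  | p2 _ ih => exact sfp_p2 ih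
  | eta _ ih =>
    exact Relation.ReflTransGen.head .eta (sfp_lam (sfp_appL (sfp_lift ih 0)))
  | sp _ ih =>
    exact Relation.ReflTransGen.head .sp ((sfp_pairL (sfp_p1 ih)).trans (sfp_pairR (sfp_p2 ih)))

theorem sfp_to_wstar {M N : Tm} (h : SFP M N) : Relation.ReflTransGen Wrel M N :=
  rtg_bind h (fun x y hs => Relation.ReflTransGen.single
    ((stepFP_classify hs).elim
      (fun hb => ⟨y, Relation.ReflTransGen.single hb, .refl⟩)
      (fun he => ⟨x, .refl, Relation.ReflTransGen.single he⟩)))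

theorem wstar_to_sfp {M N : Tm} (h : Relation.ReflTransGen Wrel M N) : SFP M N :=
  rtg_bind h (fun x y hw => by
    obtain ⟨z, hb, he⟩ := hw
    exact (rtg_bind hb (fun _ _ h1 => bpar_to_sfp h1)).trans
      (rtg_bind he (fun _ _ h1 => epar_to_sfp h1)))

/-- The reduction relation →_FP is confluent. -/
theorem stepFP_confluent (M N₁ N₂ : Tm)
    (h₁ : Relation.ReflTransGen StepFP M N₁) (h₂ : Relation.ReflTransGen StepFP M N₂) :
    ∃ P, Relation.ReflTransGen StepFP N₁ P ∧ Relation.ReflTransGen StepFP N₂ P := by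
  obtain ⟨P, hp₁, hp₂⟩ := diamond_conf wrel_diamond (sfp_to_wstar h₁) (sfp_to_wstar h₂)
  exact ⟨P, wstar_to_sfp hp₁, wstar_to_sfp hp₂⟩
end

section
/- If M and N are π-symmetric terms, then M[x:=N] is π-symmetric. -/
/-- Pure lambda terms (no pairing or projections), de Bruijn representation. -/
inductive PTm : Type
  | var : Nat → PTm
  | app : PTm → PTm → PTm
  | lam : PTm → PTm

def PTm.lift (d : Nat) : PTm → PTm
  | .var n => if n < d then .var n else .var (n + 1)
  | .app a b => .app (a.lift d) (b.lift d)
  | .lam a => .lam (a.lift (d + 1))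

def PTm.subst : PTm → Nat → PTm → PTm
  | .var n, k, s => if n = k then s else if n < k then .var n else .var (n - 1)
  | .app a b, k, s => .app (a.subst k s) (b.subst k s)
  | .lam a, k, s => .lam (a.subst (k + 1) (s.lift 0))

/-- βη-equivalence of pure lambda terms: the smallest congruence containing (β) and (η). -/
inductive BetaEta : PTm → PTm → Prop
  | beta {M N} : BetaEta (.app (.lam M) N) (M.subst 0 N)
  | eta {M} : BetaEta (.lam (.app (M.lift 0) (.var 0))) M
  | refl {M} : BetaEta M M
  | symm {M N} : BetaEta M N → BetaEta N M
  | trans {M N P} : BetaEta M N → BetaEta N P → BetaEta M P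
  | app {M M' N N'} : BetaEta M M' → BetaEta N N' → BetaEta (.app M N) (.app M' N')
  | lam {M M'} : BetaEta M M' → BetaEta (.lam M) (.lam M')

/-- π-erasure of a term. -/
def Tm.erase : Tm → PTm
  | .var n => .var n
  | .app a b => .app a.erase b.erase
  | .lam a => .lam a.erase
  | .pair a _ => a.erase
  | .p1 a => a.erase
  | .p2 a => a.erase

/-- A term is π-symmetric if the π-erasures of the two components of every pair
subterm are βη-equivalent. -/
def Tm.PiSym : Tm → Prop
  | .var _ => True
  | .app a b => a.PiSym ∧ b.PiSym
  | .lam a => a.PiSym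
  | .pair a b => a.PiSym ∧ b.PiSym ∧ BetaEta a.erase b.erase
  | .p1 a => a.PiSym
  | .p2 a => a.PiSym

namespace PTm

theorem lift_lift (M : PTm) : ∀ i j, i ≤ j →
    (M.lift j).lift i = (M.lift i).lift (j+1) := by
  induction M with
  | var n =>
    intro i j h
    simp only [PTm.lift]
    split_ifs <;> simp only [PTm.lift] <;> (try split_ifs) <;>
      first | rfl | omega | (congr 1; omega) | (exfalso; omega)
  | app a b iha ihb => intro i j h; simp [PTm.lift, iha i j h, ihb i j h]
  | lam a ih => intro i j h; simp [PTm.lift, ih (i+1) (j+1) (by omega)]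

theorem subst_lift_cancel (M : PTm) : ∀ i T, (M.lift i).subst i T = M := by
  induction M with
  | var n =>
    intro i T
    simp only [PTm.lift, PTm.subst]
    split_ifs <;> simp only [PTm.subst] <;> (try split_ifs) <;>
      first | rfl | omega | (congr 1; omega) | (exfalso; omega)
  | app a b iha ihb => intro i T; simp [PTm.lift, PTm.subst, iha, ihb]
  | lam a ih => intro i T; simp [PTm.lift, PTm.subst, ih]

theorem lift_subst_le (M : PTm) : ∀ i j s, i ≤ j →
    (M.lift i).subst (j+1) (s.lift i) = (M.subst j s).lift i := by
  induction M with
  | var n =>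
    intro i j s h
    simp only [PTm.lift, PTm.subst]
    split_ifs <;> simp only [PTm.lift, PTm.subst] <;> (try split_ifs) <;>
      first | rfl | omega | (congr 1; omega) | (exfalso; omega)
  | app a b iha ihb => intro i j s h; simp [PTm.lift, PTm.subst, iha _ _ _ h, ihb _ _ _ h]
  | lam a ih =>
    intro i j s h
    simp only [PTm.lift, PTm.subst]
    rw [lift_lift s 0 i (by omega), ih (i+1) (j+1) (s.lift 0) (by omega)]

theorem lift_subst_ge (M : PTm) : ∀ k d s, k ≤ d →
    (M.subst k s).lift d = (M.lift (d+1)).subst k (s.lift d) := by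
  induction M with
  | var n =>
    intro k d s h
    simp only [PTm.lift, PTm.subst]
    split_ifs <;> simp only [PTm.lift, PTm.subst] <;> (try split_ifs) <;>
      first | rfl | omega | (congr 1; omega) | (exfalso; omega)
  | app a b iha ihb => intro k d s h; simp [PTm.lift, PTm.subst, iha _ _ _ h, ihb _ _ _ h]
  | lam a ih =>
    intro k d s h
    simp only [PTm.lift, PTm.subst]
    rw [lift_lift s 0 d (by omega), ih (k+1) (d+1) (s.lift 0) (by omega)]

theorem subst_subst (M : PTm) : ∀ i j N S, i ≤ j →
    (M.subst i N).subst j S = (M.subst (j+1) (S.lift i)).subst i (N.subst j S) := by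
  induction M with
  | var n =>
    intro i j N S h
    simp only [PTm.subst]
    split_ifs <;> (try simp only [PTm.subst]) <;> (try split_ifs) <;>
      first
        | rfl
        | omega
        | (congr 1; omega)
        | (exfalso; omega)
        | (exact (subst_lift_cancel S i (N.subst j S)).symm)
  | app a b iha ihb => intro i j N S h; simp [PTm.subst, iha _ _ _ _ h, ihb _ _ _ _ h]
  | lam a ih =>
    intro i j N S h
    simp only [PTm.subst]
    rw [ih (i+1) (j+1) (N.lift 0) (S.lift 0) (by omega),
      lift_lift S 0 i (by omega), lift_subst_le N 0 j S (by omega)]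

end PTm

theorem BetaEta.lift_congr {M N : PTm} (h : BetaEta M N) :
    ∀ d, BetaEta (M.lift d) (N.lift d) := by
  induction h with
  | @beta M N =>
    intro d
    simp only [PTm.lift]
    rw [PTm.lift_subst_ge M 0 d N (by omega)]
    exact .beta
  | @eta M =>
    intro d
    simp only [PTm.lift, if_pos (Nat.zero_lt_succ d)]
    rw [← PTm.lift_lift M 0 d (by omega)]
    exact .eta
  | refl => intro d; exact .refl
  | symm _ ih => intro d; exact .symm (ih d)
  | trans _ _ ih1 ih2 => intro d; exact .trans (ih1 d) (ih2 d)
  | app _ _ ih1 ih2 => intro d; exact .app (ih1 d) (ih2 d)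
  | lam _ ih => intro d; exact .lam (ih (d+1))

theorem BetaEta.subst_congr {M N : PTm} (h : BetaEta M N) :
    ∀ k S, BetaEta (M.subst k S) (N.subst k S) := by
  induction h with
  | @beta M N =>
    intro k S
    simp only [PTm.subst]
    rw [PTm.subst_subst M 0 k N S (by omega)]
    exact .beta
  | @eta M =>
    intro k S
    simp only [PTm.subst, if_neg (by omega : ¬ (0:Nat) = k + 1), if_pos (Nat.zero_lt_succ k)]
    rw [PTm.lift_subst_le M 0 k S (by omega)]
    exact .eta
  | refl => intro k S; exact .refl
  | symm _ ih => intro k S; exact .symm (ih k S)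
  | trans _ _ ih1 ih2 => intro k S; exact .trans (ih1 k S) (ih2 k S)
  | app _ _ ih1 ih2 => intro k S; exact .app (ih1 k S) (ih2 k S)
  | lam _ ih => intro k S; exact .lam (ih (k+1) (S.lift 0))

theorem Tm.erase_lift (M : Tm) : ∀ d, (M.lift d).erase = M.erase.lift d := by
  induction M with
  | var n => intro d; simp only [Tm.lift, PTm.lift, Tm.erase]; split_ifs <;> rfl
  | _ => intro d; simp_all [Tm.lift, Tm.erase, PTm.lift]

theorem Tm.erase_subst (M : Tm) : ∀ k N, (M.subst k N).erase = M.erase.subst k N.erase := by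
  induction M with
  | var n => intro k N; simp only [Tm.subst, PTm.subst, Tm.erase]; split_ifs <;> rfl
  | lam a ih => intro k N; simp [Tm.subst, Tm.erase, PTm.subst, ih, Tm.erase_lift]
  | _ => intro k N; simp_all [Tm.subst, Tm.erase, PTm.subst]

theorem Tm.piSym_lift (M : Tm) : ∀ d, M.PiSym → (M.lift d).PiSym := by
  induction M with
  | var n => intro d _; simp only [Tm.lift]; split_ifs <;> trivial
  | pair a b iha ihb =>
    intro d h
    exact ⟨iha d h.1, ihb d h.2.1,
      by rw [Tm.erase_lift, Tm.erase_lift]; exact h.2.2.lift_congr d⟩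
  | _ => intro d h; simp_all [Tm.lift, Tm.PiSym]

/-- Substitution preserves π-symmetry. -/
theorem piSym_subst (M N : Tm) (k : Nat) (hM : M.PiSym) (hN : N.PiSym) :
    (M.subst k N).PiSym := by
  induction M generalizing N k with
  | var n => simp only [Tm.subst]; split_ifs <;> trivial
  | app a b iha ihb => exact ⟨iha _ _ hM.1 hN, ihb _ _ hM.2 hN⟩
  | lam a ih => exact ih _ _ hM (N.piSym_lift 0 hN)
  | pair a b iha ihb =>
    exact ⟨iha _ _ hM.1 hN, ihb _ _ hM.2.1 hN,
      by rw [Tm.erase_subst, Tm.erase_subst]; exact hM.2.2.subst_congr k N.erase⟩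
  | p1 a ih => exact ih _ _ hM hN
  | p2 a ih => exact ih _ _ hM hN
end

section
/- The theory βη-SP, i.e., the extensional lambda calculus with surjective pairing, is consistent: there exist terms M and N with M ≠_βηSP N (for instance, two distinct variables). -/
/-- The theory βη-SP: the smallest congruence containing (β), (η), (π₁), (π₂), (SP). -/
inductive EqSP : Tm → Tm → Prop
  | beta {M N} : EqSP (.app (.lam M) N) (M.subst 0 N)
  | eta {M} : EqSP (.lam (.app (M.lift 0) (.var 0))) M
  | pi1 {M N} : EqSP (.p1 (.pair M N)) M
  | pi2 {M N} : EqSP (.p2 (.pair M N)) N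
  | sp {M} : EqSP (.pair (.p1 M) (.p2 M)) M
  | refl {M} : EqSP M M
  | symm {M N} : EqSP M N → EqSP N M
  | trans {M N P} : EqSP M N → EqSP N P → EqSP M P
  | app {M M' N N'} : EqSP M M' → EqSP N N' → EqSP (.app M N) (.app M' N')
  | lam {M M'} : EqSP M M' → EqSP (.lam M) (.lam M')
  | pair {M M' N N'} : EqSP M M' → EqSP N N' → EqSP (.pair M N) (.pair M' N')
  | p1 {M M'} : EqSP M M' → EqSP (.p1 M) (.p1 M')
  | p2 {M M'} : EqSP M M' → EqSP (.p2 M) (.p2 M')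


namespace SPModel

variable {α β γ : Type} [CompleteLattice α] [CompleteLattice β] [CompleteLattice γ]

/-- Scott continuity phrased equationally in complete lattices. -/
def Cont (f : α → β) : Prop :=
  ∀ S : Set α, S.Nonempty → DirectedOn (· ≤ ·) S → f (sSup S) = ⨆ x ∈ S, f x

theorem Cont.monotone {f : α → β} (hf : Cont f) : Monotone f := by
  intro x y hxy
  have hmem : ∀ a ∈ ({x, y} : Set α), a ≤ y := by
    intro a ha
    rcases ha with h | h
    · exact h ▸ hxy
    · exact le_of_eq h
  have hd : DirectedOn (· ≤ ·) ({x, y} : Set α) := by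
    intro a ha b hb
    exact ⟨y, Or.inr rfl, hmem a ha, hmem b hb⟩
  have h1 := hf {x, y} ⟨x, Or.inl rfl⟩ hd
  have hs : sSup ({x, y} : Set α) = y := by
    rw [sSup_insert, sSup_singleton, sup_eq_right.2 hxy]
  rw [hs] at h1
  have h2 : f x ≤ ⨆ a ∈ ({x, y} : Set α), f a := le_biSup _ (Or.inl rfl)
  exact h2.trans h1.ge

theorem cont_id : Cont (fun x : α => x) := by
  intro S hS hd; simp [sSup_eq_iSup]

theorem cont_const (b : β) : Cont (fun _ : α => b) := by
  intro S hS hd; exact (biSup_const hS).symm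

theorem Cont.comp {g : β → γ} {f : α → β} (hg : Cont g) (hf : Cont f) :
    Cont (fun x => g (f x)) := by
  intro S hS hd
  show g (f (sSup S)) = ⨆ x ∈ S, g (f x)
  rw [hf S hS hd]
  have himg : f '' S = {y | ∃ x ∈ S, f x = y} := by ext y; simp [Set.mem_image]
  have hne : (f '' S).Nonempty := hS.image f
  have hdi : DirectedOn (· ≤ ·) (f '' S) := by
    rintro _ ⟨a, ha, rfl⟩ _ ⟨b, hb, rfl⟩
    rcases hd a ha b hb with ⟨c, hc, hac, hbc⟩
    exact ⟨f c, ⟨c, hc, rfl⟩, hf.monotone hac, hf.monotone hbc⟩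
  have h1 : (⨆ x ∈ S, f x) = sSup (f '' S) := by rw [sSup_image]
  rw [h1, hg _ hne hdi, iSup_image]

/-- An arbitrary (pointwise) sup of continuous functions is continuous. -/
theorem cont_iSup {ι : Sort*} {F : ι → α → β} (hF : ∀ i, Cont (F i)) :
    Cont (fun x => ⨆ i, F i x) := by
  intro S hS hd
  calc (⨆ i, F i (sSup S)) = ⨆ i, ⨆ x ∈ S, F i x := by
        refine iSup_congr fun i => hF i S hS hd
    _ = ⨆ x ∈ S, ⨆ i, F i x := by
        exact iSup_comm.trans (iSup_congr fun x => iSup_comm)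

theorem biSup_apply {ι κ : Type} {S : Set κ} {f : κ → ι → β} (i : ι) :
    (⨆ x ∈ S, f x) i = ⨆ x ∈ S, f x i := by
  rw [iSup_apply]; exact iSup_congr fun x => by rw [iSup_apply]

theorem cont_apply {ι : Type} (i : ι) : Cont (fun f : ι → α => f i) := by
  intro S hS hd
  show (sSup S) i = _
  rw [sSup_apply, iSup_subtype']

theorem cont_pi {ι : Type} {f : α → ι → β} (h : ∀ i, Cont (fun a => f a i)) :
    Cont f := by
  intro S hS hd
  funext i
  have h2 : f (sSup S) i = ⨆ x ∈ S, f x i := h i S hS hd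
  rw [h2, biSup_apply]

/-- Continuous function space. -/
def CH (α β : Type) [CompleteLattice α] [CompleteLattice β] : Type :=
  {f : α → β // Cont f}

instance : PartialOrder (CH α β) := Subtype.partialOrder _

instance : SupSet (CH α β) :=
  ⟨fun S => ⟨fun x => ⨆ f ∈ S, f.1 x, by
    have : (fun x => ⨆ f ∈ S, f.1 x) = fun x => ⨆ f : S, f.1.1 x := by
      funext x; rw [iSup_subtype']
    rw [this]
    exact cont_iSup fun f => f.1.2⟩⟩

theorem CH.sSup_apply (S : Set (CH α β)) (x : α) :
    (sSup S).1 x = ⨆ f ∈ S, f.1 x := rfl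

instance : CompleteLattice (CH α β) :=
  completeLatticeOfSup _ (by
    intro S
    constructor
    · intro f hf
      change f.1 ≤ _
      intro x
      exact le_biSup (fun g : CH α β => g.1 x) hf
    · intro u hu
      change _ ≤ u.1
      intro x
      exact iSup₂_le fun f hf => hu hf x)

theorem CH.le_def {f g : CH α β} : f ≤ g ↔ ∀ x, f.1 x ≤ g.1 x := Iff.rfl

end SPModel
namespace SPModel

theorem directedOn_image_mono {α β : Type} [CompleteLattice α] [CompleteLattice β]
    {S : Set α} (hd : DirectedOn (· ≤ ·) S) {g : α → β} (hg : Monotone g) :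
    DirectedOn (· ≤ ·) (g '' S) := by
  rintro _ ⟨a, ha, rfl⟩ _ ⟨b, hb, rfl⟩
  rcases hd a ha b hb with ⟨c, hc, hac, hbc⟩
  exact ⟨g c, ⟨c, hc, rfl⟩, hg hac, hg hbc⟩

theorem cont_map_biSup {α β κ : Type} [CompleteLattice α] [CompleteLattice β]
    {f : α → β} (hf : Cont f) {S : Set κ} (G : κ → α) (hne : S.Nonempty)
    (hd : DirectedOn (· ≤ ·) (G '' S)) :
    f (⨆ i ∈ S, G i) = ⨆ i ∈ S, f (G i) := by
  rw [← sSup_image, hf _ (hne.image G) hd, iSup_image]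

theorem CH.biSup_apply {α β κ : Type} [CompleteLattice α] [CompleteLattice β]
    (S : Set κ) (F : κ → CH α β) (x : α) :
    (⨆ i ∈ S, F i).1 x = ⨆ i ∈ S, (F i).1 x := by
  rw [← sSup_image, CH.sSup_apply, iSup_image]

theorem CH.eval_monotone {α β : Type} [CompleteLattice α] [CompleteLattice β] (x : α) :
    Monotone (fun f : CH α β => f.1 x) := fun f g h => h x

/-- A bundled complete lattice. -/
structure Dom : Type 1 where
  car : Type
  lat : CompleteLattice car

instance (D : Dom) : CompleteLattice D.car := D.lat

/-- The levels of the inverse limit solving `C ≅ [Cᴺ → C]`. -/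
def LvD : ℕ → Dom
  | 0 => ⟨Prop, inferInstance⟩
  | n + 1 => ⟨CH (ℕ → (LvD n).car) (LvD n).car, inferInstance⟩

abbrev Lv (n : ℕ) : Type := (LvD n).car

/-- Embedding-projection pairs. -/
structure EP (A B : Dom) where
  e : A.car → B.car
  p : B.car → A.car
  ce : Cont e
  cp : Cont p
  pe : ∀ x, p (e x) = x
  ep : ∀ y, e (p y) ≤ y

theorem EP.gc {A B : Dom} (h : EP A B) : GaloisConnection h.e h.p := by
  intro a b
  constructor
  · intro hab
    calc a = h.p (h.e a) := (h.pe a).symm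
    _ ≤ h.p b := h.cp.monotone hab
  · intro hab
    calc h.e a ≤ h.e (h.p b) := h.ce.monotone hab
    _ ≤ b := h.ep b

theorem cont_pow {α β : Type} [CompleteLattice α] [CompleteLattice β]
    {f : α → β} (hf : Cont f) :
    Cont (fun (σ : ℕ → α) k => f (σ k)) :=
  cont_pi fun k => hf.comp (cont_apply k)

/-- Step an e-p pair through the functor `X ↦ CH (ℕ → X) X`. -/
def EP.step {A B : Dom} (h : EP A B) :
    EP ⟨CH (ℕ → A.car) A.car, inferInstance⟩ ⟨CH (ℕ → B.car) B.car, inferInstance⟩ where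
  e f := ⟨fun σ => h.e (f.1 (fun k => h.p (σ k))),
    (h.ce.comp f.2).comp (cont_pow h.cp)⟩
  p g := ⟨fun σ => h.p (g.1 (fun k => h.e (σ k))),
    (h.cp.comp g.2).comp (cont_pow h.ce)⟩
  ce := by
    intro S hS hd
    apply Subtype.ext
    funext σ
    show h.e ((sSup S).1 (fun k => h.p (σ k))) = _
    rw [CH.sSup_apply]
    rw [cont_map_biSup h.ce _ hS (directedOn_image_mono hd (CH.eval_monotone _))]
    erw [CH.biSup_apply]
  cp := by
    intro S hS hd
    apply Subtype.ext
    funext σ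
    show h.p ((sSup S).1 (fun k => h.e (σ k))) = _
    rw [CH.sSup_apply]
    rw [cont_map_biSup h.cp _ hS (directedOn_image_mono hd (CH.eval_monotone _))]
    erw [CH.biSup_apply]
  pe := by
    intro f
    apply Subtype.ext
    funext σ
    show h.p (h.e (f.1 fun k => h.p (h.e (σ k)))) = f.1 σ
    rw [h.pe]
    exact congrArg f.1 (funext fun k => h.pe (σ k))
  ep := by
    intro g σ
    show h.e (h.p (g.1 fun k => h.e (h.p (σ k)))) ≤ g.1 σ
    calc h.e (h.p (g.1 fun k => h.e (h.p (σ k)))) ≤ g.1 fun k => h.e (h.p (σ k)) := h.ep _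
    _ ≤ g.1 σ := g.2.monotone fun k => h.ep (σ k)

/-- The e-p pairs between consecutive levels. -/
def ep : ∀ n, EP (LvD n) (LvD (n + 1))
  | 0 =>
    { e := fun q => ⟨fun _ => q, cont_const q⟩
      p := fun f => f.1 ⊥
      ce := by
        intro S hS hd
        apply Subtype.ext
        funext σ
        show sSup S = _
        erw [CH.biSup_apply, sSup_eq_iSup]
      cp := by
        intro S hS hd
        show (sSup S).1 ⊥ = _
        erw [CH.sSup_apply]
        rfl
      pe := fun x => rfl
      ep := by
        intro f σ
        show f.1 ⊥ ≤ f.1 σ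
        exact f.2.monotone bot_le }
  | n + 1 => (ep n).step

end SPModel
namespace SPModel

/-- The inverse limit. -/
def Dlim : Type := {d : ∀ n, Lv n // ∀ n, (ep n).p (d (n + 1)) = d n}

instance : PartialOrder Dlim := Subtype.partialOrder _

theorem Dlim.le_def {d d' : Dlim} : d ≤ d' ↔ ∀ n, d.1 n ≤ d'.1 n := Iff.rfl

theorem Dlim.proj_mono (n : ℕ) : Monotone (fun d : Dlim => d.1 n) := fun _ _ h => h n

instance : InfSet Dlim :=
  ⟨fun S => ⟨fun n => ⨅ d ∈ S, d.1 n, by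
    intro n
    show (ep n).p (⨅ d ∈ S, d.1 (n + 1)) = ⨅ d ∈ S, d.1 n
    rw [← sInf_image, (ep n).gc.u_sInf, iInf_image]
    exact iInf_congr fun d => iInf_congr fun _ => d.2 n⟩⟩

theorem Dlim.sInf_apply (S : Set Dlim) (n : ℕ) :
    (sInf S).1 n = ⨅ d ∈ S, d.1 n := rfl

instance : CompleteLattice Dlim :=
  completeLatticeOfInf _ (by
    intro S
    constructor
    · intro d hd n
      exact iInf₂_le d hd
    · intro u hu n
      exact le_iInf₂ fun d hd => hu hd n)

theorem Dlim.sSup_apply_of_directed {S : Set Dlim} (hS : S.Nonempty)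
    (hd : DirectedOn (· ≤ ·) S) (n : ℕ) :
    (sSup S).1 n = ⨆ d ∈ S, d.1 n := by
  have coh : ∀ m, (ep m).p (⨆ d ∈ S, d.1 (m + 1)) = ⨆ d ∈ S, d.1 m := by
    intro m
    rw [cont_map_biSup (ep m).cp _ hS (directedOn_image_mono hd (Dlim.proj_mono (m + 1)))]
    exact iSup_congr fun d => iSup_congr fun _ => d.2 m
  have hz : IsLUB S ⟨fun m => ⨆ d ∈ S, d.1 m, coh⟩ := by
    constructor
    · intro d hdm m
      exact le_biSup (fun d : Dlim => d.1 m) hdm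
    · intro u hu m
      exact iSup₂_le fun d hdm => hu hdm m
  rw [hz.sSup_eq]

theorem Dlim.cont_proj (n : ℕ) : Cont (fun d : Dlim => d.1 n) := by
  intro S hS hd
  exact Dlim.sSup_apply_of_directed hS hd n

theorem Dlim.iSup_apply_chain (F : ℕ → Dlim) (hF : Monotone F) (m : ℕ) :
    (⨆ n, F n).1 m = ⨆ n, (F n).1 m := by
  have hne : (Set.range F).Nonempty := ⟨F 0, 0, rfl⟩
  have hd : DirectedOn (· ≤ ·) (Set.range F) := by
    rintro _ ⟨a, rfl⟩ _ ⟨b, rfl⟩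
    exact ⟨F (max a b), ⟨max a b, rfl⟩, hF (le_max_left a b), hF (le_max_right a b)⟩
  rw [iSup, Dlim.sSup_apply_of_directed hne hd m]
  exact iSup_range

/-- Embedding of level `n` into the limit (left adjoint of the projection). -/
def emb (n : ℕ) (x : Lv n) : Dlim := sInf {d : Dlim | x ≤ d.1 n}

theorem emb_gc (n : ℕ) : GaloisConnection (emb n) (fun d : Dlim => d.1 n) := by
  intro x d
  constructor
  · intro h
    refine le_trans ?_ (Dlim.proj_mono n h)
    show x ≤ ⨅ z ∈ {d : Dlim | x ≤ d.1 n}, z.1 n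
    exact le_iInf₂ fun z hz => hz
  · intro h
    exact sInf_le h

theorem cont_emb (n : ℕ) : Cont (emb n) := by
  intro S hS hd
  exact (emb_gc n).l_sSup

/-- Move up along the chain of levels. -/
def upLe {n m : ℕ} (h : n ≤ m) (x : Lv n) : Lv m :=
  Nat.leRec (motive := fun m _ => Lv m) x (fun k _ y => (ep k).e y) h

/-- Move down along the chain of levels. -/
def dnLe {n m : ℕ} (h : n ≤ m) : Lv m → Lv n :=
  Nat.leRec (motive := fun m _ => Lv m → Lv n) id (fun k _ f y => f ((ep k).p y)) h

@[simp] theorem upLe_self {n : ℕ} (x : Lv n) : upLe (le_refl n) x = x := Nat.leRec_self _ _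

theorem upLe_succ {n m : ℕ} (h : n ≤ m) {h2 : n ≤ m + 1} (x : Lv n) :
    upLe h2 x = (ep m).e (upLe h x) := by
  unfold upLe; rw [Nat.leRec_succ _ _ h]

@[simp] theorem dnLe_self {n : ℕ} (x : Lv n) : dnLe (le_refl n) x = x := by
  unfold dnLe; rw [Nat.leRec_self]; rfl

theorem dnLe_succ {n m : ℕ} (h : n ≤ m) {h2 : n ≤ m + 1} (y : Lv (m + 1)) :
    dnLe h2 y = dnLe h ((ep m).p y) := by
  unfold dnLe; rw [Nat.leRec_succ _ _ h]

theorem dnLe_p {n : ℕ} : ∀ (m : ℕ) (h : n + 1 ≤ m) (y : Lv m),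
    (ep n).p (dnLe h y) = dnLe (Nat.le_of_succ_le h) y := by
  refine Nat.le_induction ?_ ?_
  · intro y
    rw [dnLe_self, dnLe_succ (le_refl n), dnLe_self]
  · intro m h ih y
    rw [dnLe_succ h, ih, ← dnLe_succ (Nat.le_of_succ_le h)]

/-- A coherent sequence through a given point. -/
def W (n : ℕ) (x : Lv n) : Dlim :=
  ⟨fun m => if h : m ≤ n then dnLe h x else upLe (Nat.le_of_not_le h) x, by
    intro m
    show (ep m).p (dite _ _ _) = dite _ _ _
    by_cases h1 : m + 1 ≤ n
    · rw [dif_pos h1, dif_pos (Nat.le_of_succ_le h1), dnLe_p]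
    · by_cases h2 : m ≤ n
      · have : n = m := by omega
        subst this
        rw [dif_neg h1, dif_pos h2]
        rw [upLe_succ (le_refl n) x, (ep n).pe, upLe_self, dnLe_self]
      · rw [dif_neg h1, dif_neg h2]
        have h3 : n ≤ m := Nat.le_of_not_le h2
        rw [upLe_succ h3 x, (ep m).pe]⟩

theorem W_val (n : ℕ) (x : Lv n) : (W n x).1 n = x := by
  show dite _ _ _ = x
  rw [dif_pos (le_refl n), dnLe_self]

@[simp] theorem emb_val_self (n : ℕ) (x : Lv n) : (emb n x).1 n = x := by
  refine le_antisymm ?_ ((emb_gc n).le_u_l x)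
  have : emb n x ≤ W n x := sInf_le (by show x ≤ (W n x).1 n; rw [W_val])
  exact le_of_le_of_eq (this n) (W_val n x)

theorem emb_e (n : ℕ) (x : Lv n) : emb (n + 1) ((ep n).e x) = emb n x := by
  unfold emb
  congr 1
  ext d
  show (ep n).e x ≤ d.1 (n + 1) ↔ x ≤ d.1 n
  rw [(ep n).gc _ _, d.2 n]

theorem emb_upLe {n : ℕ} : ∀ (m : ℕ) (h : n ≤ m) (x : Lv n), emb m (upLe h x) = emb n x := by
  refine Nat.le_induction ?_ ?_
  · intro x; rw [upLe_self]
  · intro m h ih x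
    rw [upLe_succ h, emb_e, ih]

theorem emb_proj_le (n : ℕ) (d : Dlim) : emb n (d.1 n) ≤ d := (emb_gc n).l_le (le_refl _)

theorem upLe_proj_le {n : ℕ} : ∀ (m : ℕ) (h : n ≤ m) (d : Dlim),
    upLe h (d.1 n) ≤ d.1 m := by
  refine Nat.le_induction ?_ ?_
  · intro d; rw [upLe_self]
  · intro m h ih d
    rw [upLe_succ h]
    calc (ep m).e (upLe h (d.1 n)) ≤ (ep m).e (d.1 m) := (ep m).ce.monotone (ih d)
    _ = (ep m).e ((ep m).p (d.1 (m + 1))) := by rw [d.2 m]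
    _ ≤ d.1 (m + 1) := (ep m).ep _

theorem emb_proj_chain (d : Dlim) : Monotone (fun n => emb n (d.1 n)) := by
  refine monotone_nat_of_le_succ fun n => ?_
  rw [← emb_upLe (n + 1) (Nat.le_succ n) (d.1 n)]
  exact ((emb_gc (n + 1)).monotone_l) (upLe_proj_le (n + 1) (Nat.le_succ n) d)

theorem iSup_emb_proj (d : Dlim) : (⨆ n, emb n (d.1 n)) = d := by
  refine le_antisymm (iSup_le fun n => emb_proj_le n d) ?_
  intro m
  show d.1 m ≤ (⨆ n, emb n (d.1 n)).1 m
  rw [Dlim.iSup_apply_chain _ (emb_proj_chain d)]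
  calc d.1 m = (emb m (d.1 m)).1 m := (emb_val_self m _).symm
  _ ≤ ⨆ n, (emb n (d.1 n)).1 m := le_iSup (fun n => (emb n (d.1 n)).1 m) m

theorem emb_val_succ {n m : ℕ} (h : n ≤ m) (x : Lv n) :
    (emb n x).1 (m + 1) = (ep m).e ((emb n x).1 m) := by
  rw [← emb_upLe m h x, emb_val_self]
  conv_lhs => rw [← emb_e m (upLe h x)]
  rw [emb_val_self]

theorem proj_dnLe (d : Dlim) {n : ℕ} : ∀ (m : ℕ) (h : n ≤ m), d.1 n = dnLe h (d.1 m) := by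
  refine Nat.le_induction ?_ ?_
  · rw [dnLe_self]
  · intro m h ih
    rw [dnLe_succ h, d.2 m, ← ih]

end SPModel
namespace SPModel

noncomputable section

abbrev toCH {n : ℕ} (f : Lv (n + 1)) : CH (ℕ → Lv n) (Lv n) := f

theorem ep_succ_e_apply {n : ℕ} (g : Lv (n + 1)) (σ : ℕ → Lv (n + 1)) :
    (toCH ((ep (n + 1)).e g)).1 σ
      = (ep n).e ((toCH g).1 (fun k => (ep n).p (σ k))) := rfl

theorem ep_succ_p_apply {n : ℕ} (g : Lv (n + 2)) (σ : ℕ → Lv n) :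
    (toCH ((ep (n + 1)).p g)).1 σ
      = (ep n).p ((toCH g).1 (fun k => (ep n).e (σ k))) := rfl

theorem cont_iSup_chain {α β : Type} [CompleteLattice α] [CompleteLattice β]
    {f : α → β} (hf : Cont f) {F : ℕ → α} (hF : Monotone F) :
    f (⨆ n, F n) = ⨆ n, f (F n) := by
  have hne : (Set.range F).Nonempty := ⟨F 0, 0, rfl⟩
  have hd : DirectedOn (· ≤ ·) (Set.range F) := by
    rintro _ ⟨a, rfl⟩ _ ⟨b, rfl⟩
    exact ⟨F (max a b), ⟨max a b, rfl⟩, hF (le_max_left a b), hF (le_max_right a b)⟩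
  rw [iSup, hf _ hne hd]
  exact iSup_range

/-- The function part of the iso `Dlim → CH (ℕ → Dlim) Dlim`. -/
def PhiFun (d : Dlim) (ρ : ℕ → Dlim) : Dlim :=
  ⨆ n, emb n ((toCH (d.1 (n + 1))).1 (fun k => (ρ k).1 n))

theorem PhiFun_chain (d : Dlim) (ρ : ℕ → Dlim) :
    Monotone (fun n => emb n ((toCH (d.1 (n + 1))).1 (fun k => (ρ k).1 n))) := by
  refine monotone_nat_of_le_succ fun n => ?_
  set A : Lv n := (toCH (d.1 (n + 1))).1 (fun k => (ρ k).1 n) with hA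
  rw [← emb_e n A]
  refine (emb_gc (n + 1)).monotone_l ?_
  have h1 : (ep n).e A
      = (toCH ((ep (n + 1)).e (d.1 (n + 1)))).1 (fun k => (ep n).e ((ρ k).1 n)) := by
    rw [ep_succ_e_apply]
    have h0 : (fun k => (ep n).p ((ep n).e ((ρ k).1 n))) = fun k => (ρ k).1 n := by
      funext k; rw [(ep n).pe]
    rw [h0]
  rw [h1]
  have h2 : (ep (n + 1)).e (d.1 (n + 1)) ≤ d.1 (n + 2) := by
    calc (ep (n + 1)).e (d.1 (n + 1)) = (ep (n + 1)).e ((ep (n + 1)).p (d.1 (n + 2))) := by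
          rw [d.2 (n + 1)]
    _ ≤ d.1 (n + 2) := (ep (n + 1)).ep _
  calc (toCH ((ep (n + 1)).e (d.1 (n + 1)))).1 (fun k => (ep n).e ((ρ k).1 n))
      ≤ (toCH (d.1 (n + 2))).1 (fun k => (ep n).e ((ρ k).1 n)) := h2 _
  _ ≤ (toCH (d.1 (n + 2))).1 (fun k => (ρ k).1 (n + 1)) := by
      refine (toCH (d.1 (n + 2))).2.monotone fun k => ?_
      calc (ep n).e ((ρ k).1 n) = (ep n).e ((ep n).p ((ρ k).1 (n + 1))) := by
            rw [(ρ k).2 n]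
      _ ≤ (ρ k).1 (n + 1) := (ep n).ep _

theorem cont_PhiFun (d : Dlim) : Cont (PhiFun d) := by
  refine cont_iSup fun n => ?_
  exact (cont_emb n).comp (((toCH (d.1 (n + 1))).2).comp (cont_pow (Dlim.cont_proj n)))

def Phi (d : Dlim) : CH (ℕ → Dlim) Dlim := ⟨PhiFun d, cont_PhiFun d⟩

theorem Phi_mono : Monotone Phi := by
  intro d d' h ρ
  refine iSup_mono fun n => (emb_gc n).monotone_l ?_
  exact (h (n + 1) : d.1 (n + 1) ≤ d'.1 (n + 1)) _

/-- The levels of the inverse map. -/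
def PsiS (f : CH (ℕ → Dlim) Dlim) (n : ℕ) : Lv (n + 1) :=
  (⟨fun σ => (f.1 (fun k => emb n (σ k))).1 n,
    (Dlim.cont_proj n).comp (f.2.comp (cont_pow (cont_emb n)))⟩ : CH (ℕ → Lv n) (Lv n))

def Psi (f : CH (ℕ → Dlim) Dlim) : Dlim :=
  ⟨fun n => Nat.casesOn n ((ep 0).p (PsiS f 0)) (fun m => PsiS f m), by
    intro n
    cases n with
    | zero => rfl
    | succ m =>
      show (ep (m + 1)).p (PsiS f (m + 1)) = PsiS f m
      apply Subtype.ext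
      funext σ
      rw [ep_succ_p_apply]
      show (ep m).p ((f.1 (fun k => emb (m + 1) ((ep m).e (σ k)))).1 (m + 1)) = _
      have h1 : (fun k => emb (m + 1) ((ep m).e (σ k))) = fun k => emb m (σ k) := by
        funext k; rw [emb_e]
      rw [h1, (f.1 (fun k => emb m (σ k))).2 m]
      rfl⟩

theorem Psi_val_succ (f : CH (ℕ → Dlim) Dlim) (n : ℕ) : (Psi f).1 (n + 1) = PsiS f n := rfl

theorem Psi_mono : Monotone Psi := by
  intro f g h n
  have hS : ∀ m, PsiS f m ≤ PsiS g m := by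
    intro m σ
    exact Dlim.proj_mono m (h _)
  cases n with
  | zero => exact (ep 0).cp.monotone (hS 0)
  | succ m => exact hS m

theorem Psi_Phi (d : Dlim) : Psi (Phi d) = d := by
  have key : ∀ n, PsiS (Phi d) n = toCH (d.1 (n + 1)) := by
    intro n
    apply Subtype.ext
    funext σ
    show (PhiFun d (fun k => emb n (σ k))).1 n = (toCH (d.1 (n + 1))).1 σ
    unfold PhiFun
    rw [Dlim.iSup_apply_chain _ (PhiFun_chain d _)]
    set A : ℕ → Lv n := σ with hA -- dummy
    -- stabilization : for m ≥ n the terms are constant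
    have stab : ∀ (m : ℕ) (h : n ≤ m),
        (emb m ((toCH (d.1 (m + 1))).1 (fun k => (emb n (σ k)).1 m))).1 n
          = (toCH (d.1 (n + 1))).1 σ := by
      refine Nat.le_induction ?_ ?_
      · have h1 : (fun k => (emb n (σ k)).1 n) = σ := by
          funext k; rw [emb_val_self]
        rw [h1, emb_val_self]
      · intro m h ih
        have h1 : (fun k => (emb n (σ k)).1 (m + 1))
            = fun k => (ep m).e ((emb n (σ k)).1 m) := by
          funext k; rw [emb_val_succ h]
        set B : ℕ → Lv m := fun k => (emb n (σ k)).1 m with hB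
        have h2 : (ep m).p ((toCH (d.1 (m + 2))).1 (fun k => (ep m).e (B k)))
            = (toCH (d.1 (m + 1))).1 B := by
          rw [← ep_succ_p_apply, d.2 (m + 1)]
        set Am1 : Lv (m + 1) := (toCH (d.1 (m + 2))).1 (fun k => (ep m).e (B k)) with hAm1
        have h3 : (emb (m + 1) Am1).1 n = dnLe (Nat.le_succ_of_le h) Am1 := by
          rw [proj_dnLe (emb (m + 1) Am1) (m + 1) (Nat.le_succ_of_le h), emb_val_self]
        have h4 : (emb m ((toCH (d.1 (m + 1))).1 B)).1 n
            = dnLe h ((toCH (d.1 (m + 1))).1 B) := by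
          rw [proj_dnLe (emb m _) m h, emb_val_self]
        rw [h1, ← hAm1, h3, dnLe_succ h, h2, ← h4]
        exact ih
    -- now compute the sup of the eventually-constant chain
    have hchain : Monotone (fun m => (emb m ((toCH (d.1 (m + 1))).1
        (fun k => (emb n (σ k)).1 m))).1 n) :=
      fun a b hab => (PhiFun_chain d (fun k => emb n (σ k)) hab) n
    refine le_antisymm (iSup_le fun m => ?_) ?_
    · calc _ ≤ (emb (max m n) ((toCH (d.1 (max m n + 1))).1
            (fun k => (emb n (σ k)).1 (max m n)))).1 n := hchain (le_max_left m n)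
      _ = _ := stab (max m n) (le_max_right m n)
    · rw [← stab n (le_refl n)]
      exact le_iSup (fun m => (emb m ((toCH (d.1 (m + 1))).1
        (fun k => (emb n (σ k)).1 m))).1 n) n
  apply Subtype.ext
  funext n
  cases n with
  | zero =>
    show (ep 0).p (PsiS (Phi d) 0) = d.1 0
    rw [key 0]
    exact d.2 0
  | succ m =>
    show PsiS (Phi d) m = d.1 (m + 1)
    exact key m

theorem Phi_Psi (f : CH (ℕ → Dlim) Dlim) : Phi (Psi f) = f := by
  apply Subtype.ext
  funext ρ
  show PhiFun (Psi f) ρ = f.1 ρ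
  unfold PhiFun
  have hterm : ∀ n, (toCH ((Psi f).1 (n + 1))).1 (fun k => (ρ k).1 n)
      = (f.1 (fun k => emb n ((ρ k).1 n))).1 n := fun n => rfl
  have hrchain : Monotone (fun n => (fun k => emb n ((ρ k).1 n) : ℕ → Dlim)) := by
    intro a b hab k
    exact emb_proj_chain (ρ k) hab
  have hrsup : (⨆ n, (fun k => emb n ((ρ k).1 n) : ℕ → Dlim)) = ρ := by
    funext k
    rw [iSup_apply]
    exact iSup_emb_proj (ρ k)
  refine le_antisymm (iSup_le fun n => ?_) ?_
  · rw [hterm n]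
    calc emb n ((f.1 (fun k => emb n ((ρ k).1 n))).1 n)
        ≤ f.1 (fun k => emb n ((ρ k).1 n)) := emb_proj_le n _
    _ ≤ f.1 ρ := f.2.monotone (fun k => emb_proj_le n (ρ k))
  · have hfρ : f.1 ρ = ⨆ n, f.1 (fun k => emb n ((ρ k).1 n)) := by
      conv_lhs => rw [← hrsup]
      exact cont_iSup_chain f.2 hrchain
    rw [hfρ]
    refine iSup_le fun n => ?_
    rw [← iSup_emb_proj (f.1 (fun k => emb n ((ρ k).1 n)))]
    refine iSup_le fun m => ?_
    set N := max n m with hN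
    calc emb m ((f.1 (fun k => emb n ((ρ k).1 n))).1 m)
        ≤ emb m ((f.1 (fun k => emb N ((ρ k).1 N))).1 m) := by
          refine (emb_gc m).monotone_l (Dlim.proj_mono m ?_)
          exact f.2.monotone (hrchain (le_max_left n m))
    _ ≤ emb N ((f.1 (fun k => emb N ((ρ k).1 N))).1 N) :=
          emb_proj_chain _ (le_max_right n m)
    _ ≤ ⨆ m', emb m' ((toCH ((Psi f).1 (m' + 1))).1 (fun k => (ρ k).1 m')) := by
          rw [← hterm N]
          exact le_iSup (fun m' => emb m' ((toCH ((Psi f).1 (m' + 1))).1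
            (fun k => (ρ k).1 m'))) N

/-- The reflexivity isomorphism. -/
def PhiIso : Dlim ≃o CH (ℕ → Dlim) Dlim where
  toFun := Phi
  invFun := Psi
  left_inv := Psi_Phi
  right_inv := Phi_Psi
  map_rel_iff' := by
    intro d d'
    constructor
    · intro h
      change Phi d ≤ Phi d' at h
      have h2 := Psi_mono h
      rwa [Psi_Phi, Psi_Phi] at h2
    · exact fun h => Phi_mono h

end

end SPModel
namespace SPModel

noncomputable section

/-- The model: `D = Dlim^ℕ`, so that `D ≅ D × D` and `D ≅ [D → D]`. -/
abbrev D : Type := ℕ → Dlim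

theorem Phi_sSup (T : Set Dlim) : Phi (sSup T) = ⨆ t ∈ T, Phi t := PhiIso.map_sSup T

theorem Psi_sSup (T : Set (CH (ℕ → Dlim) Dlim)) : Psi (sSup T) = ⨆ t ∈ T, Psi t :=
  PhiIso.symm.map_sSup T

theorem Psi_biSup {κ : Type} (T : Set κ) (g : κ → CH (ℕ → Dlim) Dlim) :
    Psi (⨆ i ∈ T, g i) = ⨆ i ∈ T, Psi (g i) := by
  rw [← sSup_image, Psi_sSup, iSup_image]

theorem biSup_diag {α β : Type} [CompleteLattice α] [CompleteLattice β] {S : Set α}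
    (hS : DirectedOn (· ≤ ·) S) {H : α → α → β}
    (hmono : ∀ a ∈ S, ∀ b ∈ S, ∀ c ∈ S, a ≤ c → b ≤ c → H a b ≤ H c c) :
    (⨆ a ∈ S, ⨆ b ∈ S, H a b) = ⨆ c ∈ S, H c c := by
  refine le_antisymm (iSup₂_le fun a ha => iSup₂_le fun b hb => ?_) (iSup₂_le fun c hc => ?_)
  · obtain ⟨c, hc, hac, hbc⟩ := hS a ha b hb
    exact (hmono a ha b hb c hc hac hbc).trans (le_biSup (fun z => H z z) hc)
  · calc H c c ≤ ⨆ b ∈ S, H c b := le_biSup (fun b => H c b) hc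
    _ ≤ ⨆ a ∈ S, ⨆ b ∈ S, H a b := le_biSup (fun a => ⨆ b ∈ S, H a b) hc

theorem cont_Phi_app {α : Type} [CompleteLattice α] {F : α → Dlim} {G : α → D}
    (hF : Cont F) (hG : Cont G) : Cont (fun a => (Phi (F a)).1 (G a)) := by
  intro S hS hd
  show (Phi (F (sSup S))).1 (G (sSup S)) = _
  rw [hF S hS hd, hG S hS hd]
  have h1 : Phi (⨆ a ∈ S, F a) = ⨆ a ∈ S, Phi (F a) := by
    rw [← sSup_image, Phi_sSup, iSup_image]
  rw [h1, CH.biSup_apply]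
  have h2 : ∀ a ∈ S, (Phi (F a)).1 (⨆ b ∈ S, G b) = ⨆ b ∈ S, (Phi (F a)).1 (G b) := by
    intro a _
    exact cont_map_biSup (Phi (F a)).2 G hS (directedOn_image_mono hd hG.monotone)
  calc (⨆ a ∈ S, (Phi (F a)).1 (⨆ b ∈ S, G b))
      = ⨆ a ∈ S, ⨆ b ∈ S, (Phi (F a)).1 (G b) := by
        exact iSup_congr fun a => iSup_congr fun ha => h2 a ha
  _ = ⨆ a ∈ S, (Phi (F a)).1 (G a) := by
      refine biSup_diag hd ?_
      intro a ha b hb c hc hac hbc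
      calc (Phi (F a)).1 (G b) ≤ (Phi (F c)).1 (G b) :=
            Phi_mono (hF.monotone hac) (G b)
      _ ≤ (Phi (F c)).1 (G c) := (Phi (F c)).2.monotone (hG.monotone hbc)

/-- Application in the model. -/
def ap (d x : D) : D := fun n => (Phi (d n)).1 x

/-- Abstraction in the model. -/
def lam (f : CH D D) : D :=
  fun n => Psi ⟨fun x => f.1 x n, (cont_apply n).comp f.2⟩

theorem beta_law (f : CH D D) (x : D) : ap (lam f) x = f.1 x := by
  funext n
  show (Phi (Psi _)).1 x = f.1 x n
  erw [Phi_Psi]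

theorem eta_law (d : D) (h : Cont (fun x => ap d x)) : lam ⟨fun x => ap d x, h⟩ = d := by
  funext n
  show Psi _ = d n
  have : (⟨fun x => ap d x n, _⟩ : CH (ℕ → Dlim) Dlim) = Phi (d n) :=
    Subtype.ext (funext fun x => rfl)
  rw [this, Psi_Phi]

theorem cont_ap {α : Type} [CompleteLattice α] {F G : α → D}
    (hF : Cont F) (hG : Cont G) : Cont (fun a => ap (F a) (G a)) :=
  cont_pi fun n => cont_Phi_app ((cont_apply n).comp hF) hG

def slice (n : ℕ) (g : CH D D) : CH (ℕ → Dlim) Dlim :=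
  ⟨fun x => g.1 x n, (cont_apply n).comp g.2⟩

theorem lam_eq_slice (g : CH D D) (n : ℕ) : lam g n = Psi (slice n g) := rfl

theorem cont_lam {α : Type} [CompleteLattice α] {H : α → CH D D}
    (hH : Cont (fun a => (H a).1)) : Cont (fun a => lam (H a)) := by
  intro S hS hd
  funext n
  have hq : (H (sSup S)).1 = ⨆ a ∈ S, (H a).1 := hH S hS hd
  have h1 : slice n (H (sSup S)) = ⨆ a ∈ S, slice n (H a) := by
    apply Subtype.ext
    funext x
    have h2 : (slice n (H (sSup S))).1 x = ⨆ a ∈ S, (H a).1 x n := by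
      show (H (sSup S)).1 x n = _
      rw [hq, biSup_apply x, biSup_apply n]
    rw [h2, CH.biSup_apply]
    rfl
  show Psi (slice n (H (sSup S))) = (⨆ a ∈ S, lam (H a)) n
  rw [h1, Psi_biSup, biSup_apply n]
  rfl

/-- Pairing in the model: interleaving of sequences. -/
def pairD (a b : D) : D := fun n => if n % 2 = 0 then a (n / 2) else b (n / 2)

def fstD (d : D) : D := fun n => d (2 * n)

def sndD (d : D) : D := fun n => d (2 * n + 1)

theorem fst_pair (a b : D) : fstD (pairD a b) = a := by
  funext n
  show (if (2 * n) % 2 = 0 then a ((2 * n) / 2) else b ((2 * n) / 2)) = a n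
  have h1 : (2 * n) % 2 = 0 := by omega
  have h2 : (2 * n) / 2 = n := by omega
  rw [if_pos h1, h2]

theorem snd_pair (a b : D) : sndD (pairD a b) = b := by
  funext n
  show (if (2 * n + 1) % 2 = 0 then a ((2 * n + 1) / 2) else b ((2 * n + 1) / 2)) = b n
  have h1 : ¬((2 * n + 1) % 2 = 0) := by omega
  have h2 : (2 * n + 1) / 2 = n := by omega
  rw [if_neg h1, h2]

theorem sp_law (d : D) : pairD (fstD d) (sndD d) = d := by
  funext n
  show (if n % 2 = 0 then d (2 * (n / 2)) else d (2 * (n / 2) + 1)) = d n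
  by_cases h : n % 2 = 0
  · rw [if_pos h]
    exact congrArg d (by omega)
  · rw [if_neg h]
    exact congrArg d (by omega)

theorem cont_pairD {α : Type} [CompleteLattice α] {F G : α → D}
    (hF : Cont F) (hG : Cont G) : Cont (fun a => pairD (F a) (G a)) := by
  refine cont_pi fun n => ?_
  show Cont (fun a => if n % 2 = 0 then F a (n / 2) else G a (n / 2))
  by_cases h : n % 2 = 0
  · simp only [if_pos h]
    exact (cont_apply (n / 2)).comp hF
  · simp only [if_neg h]
    exact (cont_apply (n / 2)).comp hG

theorem cont_fstD {α : Type} [CompleteLattice α] {F : α → D} (hF : Cont F) :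
    Cont (fun a => fstD (F a)) :=
  cont_pi fun n => (cont_apply (2 * n)).comp hF

theorem cont_sndD {α : Type} [CompleteLattice α] {F : α → D} (hF : Cont F) :
    Cont (fun a => sndD (F a)) :=
  cont_pi fun n => (cont_apply (2 * n + 1)).comp hF

/-- The limit is nontrivial. -/
theorem Dlim_bot_ne_top : (⊥ : Dlim) ≠ (⊤ : Dlim) := by
  intro h
  have hbot : (⊥ : Dlim).1 0 = (⊥ : Lv 0) := by
    refine le_antisymm ?_ bot_le
    have h1 : (⊥ : Dlim) ≤ W 0 ⊥ := bot_le
    exact le_of_le_of_eq (h1 0) (W_val 0 ⊥)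
  have htop : (⊤ : Dlim).1 0 = (⊤ : Lv 0) := by
    refine le_antisymm le_top ?_
    have h1 : W 0 ⊤ ≤ (⊤ : Dlim) := le_top
    exact le_of_eq_of_le (W_val 0 ⊤).symm (h1 0)
  rw [h, htop] at hbot
  have : (⊤ : Prop) ≤ (⊥ : Prop) := le_of_eq hbot
  simpa using this

theorem D_bot_ne_top : (⊥ : D) ≠ (⊤ : D) := by
  intro h
  apply Dlim_bot_ne_top
  calc (⊥ : Dlim) = (⊥ : D) 0 := rfl
  _ = (⊤ : D) 0 := by rw [h]
  _ = (⊤ : Dlim) := rfl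

end

end SPModel
namespace SPModel

noncomputable section

abbrev Env : Type := ℕ → D

/-- Extend an environment (de Bruijn cons). -/
def consE (x : D) (ρ : Env) : Env := fun k => Nat.casesOn k x (fun j => ρ j)

theorem cont_consE_x (ρ : Env) : Cont (fun x : D => consE x ρ) := by
  refine cont_pi fun k => ?_
  cases k with
  | zero => exact cont_id
  | succ j => exact cont_const (ρ j)

theorem cont_consE_rho (x : D) : Cont (fun ρ : Env => consE x ρ) := by
  refine cont_pi fun k => ?_
  cases k with
  | zero => exact cont_const x
  | succ j => exact cont_apply j

/-- Semantic abstraction on environment-families. -/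
def LAM (g : CH Env D) : CH Env D :=
  ⟨fun ρ => lam ⟨fun x => g.1 (consE x ρ), g.2.comp (cont_consE_x ρ)⟩,
   cont_lam (H := fun ρ => ⟨fun x => g.1 (consE x ρ), g.2.comp (cont_consE_x ρ)⟩)
     (cont_pi fun x => g.2.comp (cont_consE_rho x))⟩

/-- The denotational semantics. -/
def den : Tm → CH Env D
  | .var n => ⟨fun ρ => ρ n, cont_apply n⟩
  | .app M N => ⟨fun ρ => ap ((den M).1 ρ) ((den N).1 ρ), cont_ap (den M).2 (den N).2⟩
  | .lam M => LAM (den M)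
  | .pair M N => ⟨fun ρ => pairD ((den M).1 ρ) ((den N).1 ρ), cont_pairD (den M).2 (den N).2⟩
  | .p1 M => ⟨fun ρ => fstD ((den M).1 ρ), cont_fstD (den M).2⟩
  | .p2 M => ⟨fun ρ => sndD ((den M).1 ρ), cont_sndD (den M).2⟩

/-- Environment reindexing for `lift`. -/
def shiftE (d : ℕ) (ρ : Env) : Env := fun k => ρ (if k < d then k else k + 1)

/-- Environment insertion for `subst`. -/
def insE (k : ℕ) (a : D) (ρ : Env) : Env :=
  fun j => if j < k then ρ j else if j = k then a else ρ (j - 1)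

theorem shiftE_consE (d : ℕ) (x : D) (ρ : Env) :
    shiftE (d + 1) (consE x ρ) = consE x (shiftE d ρ) := by
  funext k
  cases k with
  | zero =>
    show consE x ρ (if 0 < d + 1 then 0 else 0 + 1) = x
    rw [if_pos (Nat.succ_pos d)]
    rfl
  | succ k =>
    show consE x ρ (if k + 1 < d + 1 then k + 1 else k + 1 + 1) = ρ (if k < d then k else k + 1)
    by_cases h : k < d
    · rw [if_pos (Nat.succ_lt_succ h), if_pos h]
      rfl
    · rw [if_neg (fun hc => h (Nat.lt_of_succ_lt_succ hc)), if_neg h]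
      rfl

theorem shiftE_zero_consE (x : D) (ρ : Env) : shiftE 0 (consE x ρ) = ρ := by
  funext k
  show consE x ρ (if k < 0 then k else k + 1) = ρ k
  rw [if_neg (Nat.not_lt_zero k)]
  rfl

theorem insE_consE (k : ℕ) (a x : D) (ρ : Env) :
    insE (k + 1) a (consE x ρ) = consE x (insE k a ρ) := by
  funext j
  cases j with
  | zero =>
    show (if 0 < k + 1 then consE x ρ 0 else _) = x
    rw [if_pos (Nat.succ_pos k)]
    rfl
  | succ j =>
    show (if j + 1 < k + 1 then consE x ρ (j + 1)
        else if j + 1 = k + 1 then a else consE x ρ (j + 1 - 1))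
      = (if j < k then ρ j else if j = k then a else ρ (j - 1))
    by_cases h1 : j < k
    · rw [if_pos (Nat.succ_lt_succ h1), if_pos h1]
      rfl
    · rw [if_neg (fun hc => h1 (Nat.lt_of_succ_lt_succ hc)), if_neg h1]
      by_cases h2 : j = k
      · rw [if_pos (by omega : j + 1 = k + 1), if_pos h2]
      · rw [if_neg (by omega : ¬(j + 1 = k + 1)), if_neg h2]
        obtain ⟨m, rfl⟩ : ∃ m, j = m + 1 := ⟨j - 1, by omega⟩
        rfl

theorem insE_zero (a : D) (ρ : Env) : insE 0 a ρ = consE a ρ := by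
  funext j
  cases j with
  | zero =>
    show (if 0 < 0 then ρ 0 else if 0 = 0 then a else _) = a
    rw [if_neg (lt_irrefl 0), if_pos rfl]
  | succ j =>
    show (if j + 1 < 0 then _ else if j + 1 = 0 then a else ρ (j + 1 - 1)) = ρ j
    rw [if_neg (Nat.not_lt_zero _), if_neg (Nat.succ_ne_zero j)]
    rfl

theorem den_lift (M : Tm) : ∀ (d : ℕ) (ρ : Env),
    (den (M.lift d)).1 ρ = (den M).1 (shiftE d ρ) := by
  induction M with
  | var n =>
    intro d ρ
    show (den (if n < d then Tm.var n else Tm.var (n + 1))).1 ρ = shiftE d ρ n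
    by_cases h : n < d
    · rw [if_pos h]
      show ρ n = ρ (if n < d then n else n + 1)
      rw [if_pos h]
    · rw [if_neg h]
      show ρ (n + 1) = ρ (if n < d then n else n + 1)
      rw [if_neg h]
  | app M N ihM ihN =>
    intro d ρ
    show ap ((den (M.lift d)).1 ρ) ((den (N.lift d)).1 ρ) = _
    rw [ihM, ihN]
    rfl
  | lam M ihM =>
    intro d ρ
    show lam _ = lam _
    refine congrArg lam (Subtype.ext (funext fun x => ?_))
    show (den (M.lift (d + 1))).1 (consE x ρ) = (den M).1 (consE x (shiftE d ρ))
    rw [ihM, shiftE_consE]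
  | pair M N ihM ihN =>
    intro d ρ
    show pairD ((den (M.lift d)).1 ρ) ((den (N.lift d)).1 ρ) = _
    rw [ihM, ihN]
    rfl
  | p1 M ihM =>
    intro d ρ
    show fstD ((den (M.lift d)).1 ρ) = _
    rw [ihM]
    rfl
  | p2 M ihM =>
    intro d ρ
    show sndD ((den (M.lift d)).1 ρ) = _
    rw [ihM]
    rfl

theorem den_subst (M : Tm) : ∀ (k : ℕ) (s : Tm) (ρ : Env),
    (den (M.subst k s)).1 ρ = (den M).1 (insE k ((den s).1 ρ) ρ) := by
  induction M with
  | var n =>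
    intro k s ρ
    show (den (if n = k then s else if n < k then Tm.var n else Tm.var (n - 1))).1 ρ
      = insE k ((den s).1 ρ) ρ n
    show _ = if n < k then ρ n else if n = k then (den s).1 ρ else ρ (n - 1)
    by_cases h1 : n = k
    · rw [if_pos h1, if_neg (by omega : ¬ n < k), if_pos h1]
    · rw [if_neg h1]
      by_cases h2 : n < k
      · rw [if_pos h2, if_pos h2]
        rfl
      · rw [if_neg h2, if_neg h2, if_neg h1]
        rfl
  | app M N ihM ihN =>
    intro k s ρ
    show ap ((den (M.subst k s)).1 ρ) ((den (N.subst k s)).1 ρ) = _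
    rw [ihM, ihN]
    rfl
  | lam M ihM =>
    intro k s ρ
    show lam _ = lam _
    refine congrArg lam (Subtype.ext (funext fun x => ?_))
    show (den (M.subst (k + 1) (s.lift 0))).1 (consE x ρ)
      = (den M).1 (consE x (insE k ((den s).1 ρ) ρ))
    rw [ihM, den_lift, shiftE_zero_consE, insE_consE]
  | pair M N ihM ihN =>
    intro k s ρ
    show pairD ((den (M.subst k s)).1 ρ) ((den (N.subst k s)).1 ρ) = _
    rw [ihM, ihN]
    rfl
  | p1 M ihM =>
    intro k s ρ
    show fstD ((den (M.subst k s)).1 ρ) = _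
    rw [ihM]
    rfl
  | p2 M ihM =>
    intro k s ρ
    show sndD ((den (M.subst k s)).1 ρ) = _
    rw [ihM]
    rfl

/-- Soundness of the model for βη-SP. -/
theorem den_sound {M N : Tm} (h : EqSP M N) : den M = den N := by
  induction h with
  | @beta M N =>
    apply Subtype.ext
    funext ρ
    show ap (lam _) ((den N).1 ρ) = (den (M.subst 0 N)).1 ρ
    erw [beta_law, den_subst, insE_zero]
  | @eta M =>
    apply Subtype.ext
    funext ρ
    show lam _ = (den M).1 ρ
    have h1 : (⟨fun x => (den (Tm.app (M.lift 0) (Tm.var 0))).1 (consE x ρ),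
        (den (Tm.app (M.lift 0) (Tm.var 0))).2.comp (cont_consE_x ρ)⟩ : CH D D)
      = ⟨fun x => ap ((den M).1 ρ) x,
          cont_ap (cont_const ((den M).1 ρ)) cont_id⟩ := by
      apply Subtype.ext
      funext x
      show ap ((den (M.lift 0)).1 (consE x ρ)) (consE x ρ 0) = ap ((den M).1 ρ) x
      rw [den_lift, shiftE_zero_consE]
      rfl
    rw [h1]
    exact eta_law ((den M).1 ρ) _
  | @pi1 M N =>
    apply Subtype.ext
    funext ρ
    exact fst_pair ((den M).1 ρ) ((den N).1 ρ)
  | @pi2 M N =>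
    apply Subtype.ext
    funext ρ
    exact snd_pair ((den M).1 ρ) ((den N).1 ρ)
  | @sp M =>
    apply Subtype.ext
    funext ρ
    exact sp_law ((den M).1 ρ)
  | refl => rfl
  | symm _ ih => exact ih.symm
  | trans _ _ ih1 ih2 => exact ih1.trans ih2
  | app _ _ ih1 ih2 =>
    apply Subtype.ext
    funext ρ
    show ap _ _ = ap _ _
    rw [ih1, ih2]
  | lam _ ih =>
    apply Subtype.ext
    funext ρ
    show lam _ = lam _
    refine congrArg lam (Subtype.ext (funext fun x => ?_))
    show (den _).1 (consE x ρ) = (den _).1 (consE x ρ)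
    rw [ih]
  | pair _ _ ih1 ih2 =>
    apply Subtype.ext
    funext ρ
    show pairD _ _ = pairD _ _
    rw [ih1, ih2]
  | p1 _ ih =>
    apply Subtype.ext
    funext ρ
    show fstD _ = fstD _
    rw [ih]
  | p2 _ ih =>
    apply Subtype.ext
    funext ρ
    show sndD _ = sndD _
    rw [ih]

end

end SPModel

/-- The theory βη-SP is consistent: distinct variables are not provably equal. -/
theorem eqSP_consistent : ∀ x y : Nat, x ≠ y → ¬ EqSP (.var x) (.var y) := by
  intro x y hxy h
  have hd := SPModel.den_sound h
  have h2 : (SPModel.den (Tm.var x)).1 (fun k => if k = x then (⊥ : SPModel.D) else ⊤)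
      = (SPModel.den (Tm.var y)).1 (fun k => if k = x then (⊥ : SPModel.D) else ⊤) := by
    rw [hd]
  have h3 : (if x = x then (⊥ : SPModel.D) else ⊤)
      = (if y = x then (⊥ : SPModel.D) else ⊤) := h2
  rw [if_pos rfl, if_neg (fun e => hxy e.symm)] at h3
  exact SPModel.D_bot_ne_top h3
end
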